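/- arXiv:1610.01278 — 3 statements merged into one kernel-verified Lean document; each statement's English description precedes it below -/
import Mathlib

section
/- Let G/K be a generalized flag manifold whose isotropy representation 𝔪 is irreducible as an Ad(K)-module (s = 1), and let G/K₁ be the corresponding M-space. If 𝔪 is reducible as an Ad(K₁)-module, then (G/K₁, g) is a g.o. space if and only if g is the standard metric. -/
open Module

/-- A submodule `W` of a Lie algebra is invariant under the (infinitesimal) adjoint action
of the Lie subalgebra `k`.  For a connected Lie group this corresponds to `Ad(K)`-invariance. -/
def AdInvariant {𝔤 : Type*} [LieRing 𝔤] [LieAlgebra ℝ 𝔤]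
    (k : LieSubalgebra ℝ 𝔤) (W : Submodule ℝ 𝔤) : Prop :=
  ∀ x ∈ k, ∀ w ∈ W, ⁅x, w⁆ ∈ W

/-- `W` is a nonzero irreducible module for the adjoint action of `k`
(i.e. an irreducible `Ad(K)`-module). -/
def AdIrreducible {𝔤 : Type*} [LieRing 𝔤] [LieAlgebra ℝ 𝔤]
    (k : LieSubalgebra ℝ 𝔤) (W : Submodule ℝ 𝔤) : Prop :=
  AdInvariant k W ∧ W ≠ ⊥ ∧
    ∀ U : Submodule ℝ 𝔤, U ≤ W → AdInvariant k U → U = ⊥ ∨ U = W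

/-- `W` is a reducible `Ad(K)`-module: invariant, with a proper nonzero invariant submodule. -/
def AdReducible {𝔤 : Type*} [LieRing 𝔤] [LieAlgebra ℝ 𝔤]
    (k : LieSubalgebra ℝ 𝔤) (W : Submodule ℝ 𝔤) : Prop :=
  AdInvariant k W ∧ ∃ U : Submodule ℝ 𝔤, U ≤ W ∧ AdInvariant k U ∧ U ≠ ⊥ ∧ U ≠ W

/-- Equivalence of two `Ad(K)`-modules `U` and `V`: an injective intertwining linear map
carrying `U` onto `V`. -/
def AdEquiv {𝔤 : Type*} [LieRing 𝔤] [LieAlgebra ℝ 𝔤]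
    (k : LieSubalgebra ℝ 𝔤) (U V : Submodule ℝ 𝔤) : Prop :=
  ∃ f : 𝔤 →ₗ[ℝ] 𝔤, Submodule.map f U = V ∧ (∀ u ∈ U, f u = 0 → u = 0) ∧
    ∀ x ∈ k, ∀ u ∈ U, f ⁅x, u⁆ = ⁅x, f u⁆

/-- The g.o. property of the `G`-invariant metric with associated operator `Λ` on the
homogeneous space with isotropy algebra `k` and tangent space `n`: every geodesic through
the origin is homogeneous, i.e. (by the standard criterion) for every `x ∈ n` there is
`a ∈ k` such that `⁅a + x, Λ x⁆ ∈ k`. -/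
def IsGOMetric {𝔤 : Type*} [LieRing 𝔤] [LieAlgebra ℝ 𝔤]
    (k : LieSubalgebra ℝ 𝔤) (n : Submodule ℝ 𝔤) (Λ : 𝔤 →ₗ[ℝ] 𝔤) : Prop :=
  ∀ x ∈ n, ∃ a ∈ k, ⁅a + x, Λ x⁆ ∈ k.toSubmodule

theorem aux_schur {𝔤 : Type*} [LieRing 𝔤] [LieAlgebra ℝ 𝔤] [FiniteDimensional ℝ 𝔤]
    (hcompact : ∀ x : 𝔤, x ≠ 0 → killingForm ℝ 𝔤 x x < 0)
    (𝔨 : LieSubalgebra ℝ 𝔤) (𝔪 : Submodule ℝ 𝔤)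
    (hmirr : AdIrreducible 𝔨 𝔪)
    (T : 𝔤 →ₗ[ℝ] 𝔤) (hmap : ∀ m ∈ 𝔪, T m ∈ 𝔪)
    (hsym : ∀ m ∈ 𝔪, ∀ m' ∈ 𝔪, killingForm ℝ 𝔤 (T m) m' = killingForm ℝ 𝔤 m (T m'))
    (hcomm : ∀ k ∈ 𝔨, ∀ m ∈ 𝔪, T ⁅k, m⁆ = ⁅k, T m⁆) :
    ∃ c : ℝ, ∀ m ∈ 𝔪, T m = c • m := by
  classical
  let core : InnerProductSpace.Core ℝ 𝔤 :=
  { inner := fun x y => -killingForm ℝ 𝔤 x y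
    conj_inner_symm := fun x y => by
      simpa using congrArg Neg.neg (LieModule.traceForm_comm ℝ 𝔤 𝔤 y x)
    re_inner_nonneg := fun x => by
      rcases eq_or_ne x 0 with rfl | hx
      · simp
      · simpa using le_of_lt (neg_pos.mpr (hcompact x hx))
    definite := fun x hx => by
      by_contra h
      exact absurd hx (by simpa using (ne_of_gt (neg_pos.mpr (hcompact x h))))
    add_left := fun x y z => by simp [map_add]; ring
    smul_left := fun x y r => by simp }
  letI : NormedAddCommGroup 𝔤 := core.toNormedAddCommGroup
  letI : InnerProductSpace ℝ 𝔤 := InnerProductSpace.ofCore core.toCore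
  have hinner : ∀ x y : 𝔤, (inner ℝ x y : ℝ) = -killingForm ℝ 𝔤 x y := fun _ _ => rfl
  let T' : ↥𝔪 →ₗ[ℝ] ↥𝔪 := T.restrict hmap
  have hsym' : T'.IsSymmetric := by
    intro x y
    have := hsym x x.2 y y.2
    show (inner ℝ (T x.1) y.1 : ℝ) = inner ℝ x.1 (T y.1)
    rw [hinner, hinner, this]
  have hne : Nontrivial ↥𝔪 := by
    rcases Submodule.exists_mem_ne_zero_of_ne_bot hmirr.2.1 with ⟨v, hv, hv0⟩
    exact ⟨⟨v, hv⟩, 0, by simpa using hv0⟩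
  have hpos : 0 < finrank ℝ ↥𝔪 := finrank_pos
  obtain ⟨n, hn⟩ : ∃ n, finrank ℝ ↥𝔪 = n := ⟨_, rfl⟩
  have hn0 : 0 < n := hn ▸ hpos
  have hev := hsym'.hasEigenvector_eigenvectorBasis hn ⟨0, hn0⟩
  set c := hsym'.eigenvalues hn ⟨0, hn0⟩ with hc
  obtain ⟨hvmem, hvne⟩ := hev
  set v := hsym'.eigenvectorBasis hn ⟨0, hn0⟩ with hv
  refine ⟨c, ?_⟩
  have hveq : T' v = c • v := Module.End.mem_eigenspace_iff.mp hvmem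
  let E : Submodule ℝ 𝔤 :=
  { carrier := {x | x ∈ 𝔪 ∧ T x = c • x}
    add_mem' := fun ha hb => ⟨𝔪.add_mem ha.1 hb.1, by rw [map_add, ha.2, hb.2, smul_add]⟩
    zero_mem' := ⟨𝔪.zero_mem, by simp⟩
    smul_mem' := fun r x hx => ⟨𝔪.smul_mem r hx.1, by rw [map_smul, hx.2, smul_comm]⟩ }
  have hEle : E ≤ 𝔪 := fun x hx => hx.1
  have hEinv : AdInvariant 𝔨 E := by
    intro k hk w hw
    exact ⟨hmirr.1 k hk w hw.1, by rw [hcomm k hk w hw.1, hw.2, lie_smul]⟩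
  have hEne : E ≠ ⊥ := by
    intro h
    apply hvne
    have hvE : (v : 𝔤) ∈ E := ⟨v.2, by
      have := congrArg (Subtype.val) hveq
      simpa [T', LinearMap.restrict_apply] using this⟩
    rw [h] at hvE
    exact Subtype.coe_injective (by simpa using hvE)
  rcases hmirr.2.2 E hEle hEinv with h | h
  · exact absurd h hEne
  · intro m hm
    have : m ∈ E := h ▸ hm
    exact this.2

theorem aux_forward
    {𝔤 : Type*} [LieRing 𝔤] [LieAlgebra ℝ 𝔤] [FiniteDimensional ℝ 𝔤]
    [LieAlgebra.IsSimple ℝ 𝔤]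
    (hcompact : ∀ x : 𝔤, x ≠ 0 → killingForm ℝ 𝔤 x x < 0)
    (𝔨 𝔨₁ 𝔰 : LieSubalgebra ℝ 𝔤)
    (h𝔰ab : ∀ x ∈ 𝔰, ∀ y ∈ 𝔰, ⁅x, y⁆ = (0 : 𝔤))
    (h𝔨cent : ∀ x : 𝔤, x ∈ 𝔨 ↔ ∀ s ∈ 𝔰, ⁅s, x⁆ = 0)
    (h𝔰𝔨 : 𝔰 ≤ 𝔨) (h𝔨₁𝔨 : 𝔨₁ ≤ 𝔨)
    (h𝔨sum : 𝔰.toSubmodule ⊔ 𝔨₁.toSubmodule = 𝔨.toSubmodule)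
    (h𝔨disj : Disjoint 𝔰.toSubmodule 𝔨₁.toSubmodule)
    (h𝔰𝔨₁ : ∀ s ∈ 𝔰, ∀ k ∈ 𝔨₁, ⁅s, k⁆ = (0 : 𝔤))
    (hder : ∀ x ∈ 𝔨, ∀ y ∈ 𝔨, ⁅x, y⁆ ∈ 𝔨₁)
    (𝔪 : Submodule ℝ 𝔤)
    (h𝔪compl : IsCompl 𝔨.toSubmodule 𝔪)
    (h𝔪orth : ∀ x ∈ 𝔨, ∀ y ∈ 𝔪, killingForm ℝ 𝔤 x y = 0)
    (h𝔪inv : AdInvariant 𝔨 𝔪)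
    (hmirr : AdIrreducible 𝔨 𝔪)
    (U : Submodule ℝ 𝔤) (hUle : U ≤ 𝔪) (hUinv : AdInvariant 𝔨₁ U)
    (hUne : U ≠ ⊥) (hUne' : U ≠ 𝔪)
    (Λ : 𝔤 →ₗ[ℝ] 𝔤)
    (hΛ𝔫 : ∀ x ∈ 𝔰.toSubmodule ⊔ 𝔪, Λ x ∈ 𝔰.toSubmodule ⊔ 𝔪)
    (hΛsym : ∀ x ∈ 𝔰.toSubmodule ⊔ 𝔪, ∀ y ∈ 𝔰.toSubmodule ⊔ 𝔪,
      killingForm ℝ 𝔤 (Λ x) y = killingForm ℝ 𝔤 x (Λ y))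
    (hΛpos : ∀ x ∈ 𝔰.toSubmodule ⊔ 𝔪, x ≠ 0 → 0 < -(killingForm ℝ 𝔤 (Λ x) x))
    (hΛequiv : ∀ k ∈ 𝔨₁, ∀ x ∈ 𝔰.toSubmodule ⊔ 𝔪, Λ ⁅k, x⁆ = ⁅k, Λ x⁆)
    (hGO : ∀ x ∈ 𝔰.toSubmodule ⊔ 𝔪, ∃ a ∈ 𝔨₁, ⁅a + x, Λ x⁆ ∈ 𝔨₁.toSubmodule) :
    ∃ c : ℝ, 0 < c ∧ ∀ x ∈ 𝔰.toSubmodule ⊔ 𝔪, Λ x = c • x := by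
  classical
  set 𝔫 : Submodule ℝ 𝔤 := 𝔰.toSubmodule ⊔ 𝔪 with h𝔫def
  -- basic Killing form identities
  have f1 : ∀ x y : 𝔤, killingForm ℝ 𝔤 x y = killingForm ℝ 𝔤 y x :=
    LieModule.traceForm_comm ℝ 𝔤 𝔤
  have f2 : ∀ x y z : 𝔤, killingForm ℝ 𝔤 ⁅x, y⁆ z = killingForm ℝ 𝔤 x ⁅y, z⁆ :=
    LieModule.traceForm_apply_lie_apply ℝ 𝔤 𝔤
  have f3 : ∀ z x y : 𝔤, killingForm ℝ 𝔤 ⁅z, x⁆ y = -killingForm ℝ 𝔤 x ⁅z, y⁆ := by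
    intro z x y
    rw [f2 z x y]
    have : killingForm ℝ 𝔤 x ⁅z, y⁆ = killingForm ℝ 𝔤 ⁅z, y⁆ x := f1 _ _
    rw [this, f2 z y x, ← lie_skew x y, map_neg]
  have fdef : ∀ x : 𝔤, killingForm ℝ 𝔤 x x = 0 → x = 0 := by
    intro x hx
    by_contra h
    exact absurd hx (ne_of_lt (hcompact x h))
  have skew0 : ∀ p q : 𝔤, ⁅p, q⁆ = 0 → ⁅q, p⁆ = 0 := by
    intro p q h
    rw [← neg_eq_zero, lie_skew, h]
  have skewmem : ∀ (W : Submodule ℝ 𝔤) (p q : 𝔤), ⁅p, q⁆ ∈ W → ⁅q, p⁆ ∈ W := by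
    intro W p q h
    rw [← lie_skew q p]
    exact Submodule.neg_mem _ h
  -- zero test on 𝔪
  have f5 : ∀ m ∈ 𝔪, (∀ x ∈ 𝔪, killingForm ℝ 𝔤 m x = 0) → m = 0 := by
    intro m hm h
    exact fdef m (h m hm)
  have f8 : ∀ m ∈ 𝔪, (∀ s ∈ 𝔰, ⁅s, m⁆ = 0) → m = 0 := by
    intro m hm h
    have hm𝔨 : m ∈ 𝔨.toSubmodule := (h𝔨cent m).mpr h
    have : m ∈ (⊥ : Submodule ℝ 𝔤) :=
      h𝔪compl.disjoint.le_bot (Submodule.mem_inf.mpr ⟨hm𝔨, hm⟩)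
    simpa using this
  have f6 : ∀ s ∈ 𝔰, ∀ k ∈ 𝔨, ⁅s, k⁆ = (0:𝔤) := fun s hs k hk => (h𝔨cent k).mp hk s hs
  have f11 : ∀ s ∈ 𝔰, (∀ m ∈ 𝔪, ⁅s, m⁆ = 0) → s = 0 := by
    intro s hs h
    have hall : ∀ y : 𝔤, ⁅y, s⁆ = 0 := by
      intro y
      have hy : y ∈ 𝔨.toSubmodule ⊔ 𝔪 := by
        rw [codisjoint_iff.mp h𝔪compl.codisjoint]; trivial
      obtain ⟨k, hk, m, hm, rfl⟩ := Submodule.mem_sup.mp hy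
      have h1 : ⁅s, k⁆ = 0 := f6 s hs k hk
      have h2 : ⁅s, m⁆ = 0 := h m hm
      rw [add_lie, ← lie_skew k s, ← lie_skew m s, h1, h2]
      simp
    have hc : s ∈ LieAlgebra.center ℝ 𝔤 := (LieModule.mem_maxTrivSubmodule ℝ 𝔤 𝔤 s).mpr hall
    rw [LieAlgebra.center_eq_bot] at hc
    simpa using hc
  -- a nonzero element of 𝔪
  obtain ⟨mstar, hmstarU, hmstar0⟩ := Submodule.exists_mem_ne_zero_of_ne_bot hUne
  have hmstar : mstar ∈ 𝔪 := hUle hmstarU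
  -- commuting of 𝔰-brackets
  have hswap : ∀ s ∈ 𝔰, ∀ s' ∈ 𝔰, ∀ y : 𝔤, ⁅s, ⁅s', y⁆⁆ = ⁅s', ⁅s, y⁆⁆ := by
    intro s hs s' hs' y
    rw [leibniz_lie, h𝔰ab s hs s' hs']
    simp
  have hswap2 : ∀ s ∈ 𝔰, ∀ k ∈ 𝔨, ∀ y : 𝔤, ⁅s, ⁅k, y⁆⁆ = ⁅k, ⁅s, y⁆⁆ := by
    intro s hs k hk y
    rw [leibniz_lie, f6 s hs k hk]
    simp
  -- existence of s₁ with nontrivial action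
  have hex : ∃ s₁ ∈ 𝔰, ⁅s₁, mstar⁆ ≠ 0 := by
    by_contra h
    push_neg at h
    exact hmstar0 (f8 mstar hmstar h)
  obtain ⟨s₁, hs₁, hs₁m⟩ := hex
  -- Schur for double brackets
  have hprop : ∀ s ∈ 𝔰, ∃ cs : ℝ, ∀ m ∈ 𝔪, ⁅s₁, ⁅s, m⁆⁆ = cs • m := by
    intro s hs
    refine aux_schur hcompact 𝔨 𝔪 hmirr
      ((LieAlgebra.ad ℝ 𝔤 s₁) ∘ₗ (LieAlgebra.ad ℝ 𝔤 s)) ?_ ?_ ?_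
    · intro m hm
      simp only [LinearMap.comp_apply, LieAlgebra.ad_apply]
      exact h𝔪inv s₁ (h𝔰𝔨 hs₁) _ (h𝔪inv s (h𝔰𝔨 hs) m hm)
    · intro m hm m' hm'
      simp only [LinearMap.comp_apply, LieAlgebra.ad_apply]
      rw [f3 s₁ ⁅s, m⁆ m', f3 s m ⁅s₁, m'⁆, neg_neg, hswap s hs s₁ hs₁ m']
    · intro k hk m hm
      simp only [LinearMap.comp_apply, LieAlgebra.ad_apply]
      rw [hswap2 s hs k hk m, hswap2 s₁ hs₁ k hk ⁅s, m⁆]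
  obtain ⟨c₁, hc₁⟩ := hprop s₁ hs₁
  have hc₁ne : c₁ ≠ 0 := by
    intro h
    apply hs₁m
    have : killingForm ℝ 𝔤 ⁅s₁, mstar⁆ ⁅s₁, mstar⁆ = 0 := by
      rw [f3 s₁ mstar ⁅s₁, mstar⁆, hc₁ mstar hmstar, h]
      simp
    exact fdef _ this
  have hJ1inj : ∀ m ∈ 𝔪, ⁅s₁, m⁆ = 0 → m = 0 := by
    intro m hm h
    have : c₁ • m = 0 := by rw [← hc₁ m hm, h]; simp
    rcases smul_eq_zero.mp this with h' | h'
    · exact absurd h' hc₁ne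
    · exact h'
  have hJprop : ∀ s ∈ 𝔰, ∀ cs : ℝ, (∀ m ∈ 𝔪, ⁅s₁, ⁅s, m⁆⁆ = cs • m) →
      ∀ m ∈ 𝔪, c₁ • ⁅s, m⁆ = cs • ⁅s₁, m⁆ := by
    intro s hs cs hcs m hm
    have hw𝔪 : c₁ • ⁅s, m⁆ - cs • ⁅s₁, m⁆ ∈ 𝔪 :=
      Submodule.sub_mem _ (Submodule.smul_mem _ _ (h𝔪inv s (h𝔰𝔨 hs) m hm))
        (Submodule.smul_mem _ _ (h𝔪inv s₁ (h𝔰𝔨 hs₁) m hm))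
    have hz : ⁅s₁, c₁ • ⁅s, m⁆ - cs • ⁅s₁, m⁆⁆ = 0 := by
      rw [lie_sub, lie_smul, lie_smul, hcs m hm, hc₁ m hm, smul_comm c₁ cs m]
      simp
    exact sub_eq_zero.mp (hJ1inj _ hw𝔪 hz)
  -- inner product space from B = -Killing
  let core : InnerProductSpace.Core ℝ 𝔤 :=
  { inner := fun x y => -killingForm ℝ 𝔤 x y
    conj_inner_symm := fun x y => by simpa using congrArg Neg.neg (f1 y x)
    re_inner_nonneg := fun x => by
      rcases eq_or_ne x 0 with rfl | hx
      · simp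
      · simpa using le_of_lt (neg_pos.mpr (hcompact x hx))
    definite := fun x hx => by
      by_contra h
      exact absurd hx (by simpa using (ne_of_gt (neg_pos.mpr (hcompact x h))))
    add_left := fun x y z => by simp [map_add]; ring
    smul_left := fun x y r => by simp }
  letI : NormedAddCommGroup 𝔤 := core.toNormedAddCommGroup
  letI : InnerProductSpace ℝ 𝔤 := InnerProductSpace.ofCore core.toCore
  have hinner : ∀ x y : 𝔤, (inner ℝ x y : ℝ) = -killingForm ℝ 𝔤 x y := fun _ _ => rfl
  have hs₁0 : s₁ ≠ 0 := by rintro rfl; simp at hs₁m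
  -- construction of z ∈ 𝔨, B-orthogonal to 𝔨₁
  set z : 𝔤 := s₁ - ↑(Submodule.orthogonalProjection 𝔨₁.toSubmodule s₁) with hzdef
  have hzorthm : z ∈ 𝔨₁.toSubmoduleᗮ := Submodule.sub_starProjection_mem_orthogonal (K := 𝔨₁.toSubmodule) s₁
  have hzorth : ∀ b ∈ 𝔨₁.toSubmodule, killingForm ℝ 𝔤 z b = 0 := by
    intro b hb
    have h0 : (inner ℝ b z : ℝ) = 0 := (Submodule.mem_orthogonal _ _).mp hzorthm b hb
    rw [hinner b z] at h0
    rw [f1]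
    linarith
  have hz𝔨 : z ∈ 𝔨.toSubmodule :=
    Submodule.sub_mem _ (h𝔰𝔨 hs₁) (h𝔨₁𝔨 (Submodule.orthogonalProjection 𝔨₁.toSubmodule s₁).2)
  have hz𝔨' : z ∈ 𝔰.toSubmodule ⊔ 𝔨₁.toSubmodule := by rw [h𝔨sum]; exact hz𝔨
  obtain ⟨sz, hsz, bz, hbz, hzeq⟩ := Submodule.mem_sup.mp hz𝔨'
  have hszne : sz ≠ 0 := by
    intro h
    have hz𝔨₁ : z ∈ 𝔨₁.toSubmodule := by rw [← hzeq, h, zero_add]; exact hbz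
    have hz0 : z = 0 := fdef z (hzorth z hz𝔨₁)
    have hs₁𝔨₁ : s₁ ∈ 𝔨₁.toSubmodule := by
      have : s₁ = ↑(Submodule.orthogonalProjection 𝔨₁.toSubmodule s₁) := by
        have := sub_eq_zero.mp (hzdef ▸ hz0)
        exact this
      rw [this]
      exact (Submodule.orthogonalProjection 𝔨₁.toSubmodule s₁).2
    have : s₁ ∈ (⊥ : Submodule ℝ 𝔤) := h𝔨disj.le_bot (Submodule.mem_inf.mpr ⟨hs₁, hs₁𝔨₁⟩)
    exact hs₁0 (by simpa using this)
  obtain ⟨cz, hcz⟩ := hprop sz hsz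
  have hczne : cz ≠ 0 := by
    intro h
    apply hszne
    apply f11 sz hsz
    intro m hm
    have h1 := hJprop sz hsz cz hcz m hm
    rw [h, zero_smul] at h1
    rcases smul_eq_zero.mp h1 with h2 | h2
    · exact absurd h2 hc₁ne
    · exact h2
  have hJzinj : ∀ m ∈ 𝔪, ⁅sz, m⁆ = 0 → m = 0 := by
    intro m hm h
    have h1 : cz • m = 0 := by rw [← hcz m hm, h, lie_zero]
    rcases smul_eq_zero.mp h1 with h2 | h2
    · exact absurd h2 hczne
    · exact h2
  -- projection onto 𝔪 along 𝔨
  set πm : 𝔤 →ₗ[ℝ] 𝔤 :=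
    𝔪.subtype ∘ₗ (Submodule.projectionOnto 𝔪 𝔨.toSubmodule h𝔪compl.symm) with hπmdef
  have hπmem : ∀ x : 𝔤, πm x ∈ 𝔪 := fun x =>
    (Submodule.projectionOnto 𝔪 𝔨.toSubmodule h𝔪compl.symm x).2
  have hπ𝔪 : ∀ m ∈ 𝔪, πm m = m := by
    intro m hm
    show ↑(Submodule.projectionOnto 𝔪 𝔨.toSubmodule h𝔪compl.symm m) = m
    rw [show m = ((⟨m, hm⟩ : ↥𝔪) : 𝔤) from rfl,
      Submodule.projectionOnto_apply_left h𝔪compl.symm ⟨m, hm⟩]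
  have hπ𝔨 : ∀ k ∈ 𝔨.toSubmodule, πm k = 0 := by
    intro k hk
    show ↑(Submodule.projectionOnto 𝔪 𝔨.toSubmodule h𝔪compl.symm k) = (0 : 𝔤)
    rw [Submodule.projectionOnto_apply_of_mem_right h𝔪compl.symm hk]
    rfl
  have hπ𝔰 : ∀ x ∈ 𝔫, x - πm x ∈ 𝔰.toSubmodule := by
    intro x hx
    obtain ⟨σ, hσ, m, hm, rfl⟩ := Submodule.mem_sup.mp hx
    have hπx : πm (σ + m) = m := by
      rw [map_add, hπ𝔨 σ (h𝔰𝔨 hσ), hπ𝔪 m hm, zero_add]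
    rw [hπx, add_sub_cancel_right]
    exact hσ
  -- key consequence of the g.o. condition
  have hGOK : ∀ s ∈ 𝔰, ∀ x ∈ 𝔪, killingForm ℝ 𝔤 z ⁅x, πm (Λ (s + x))⁆ = 0 := by
    intro s hs x hx
    have hv𝔫 : s + x ∈ 𝔫 := Submodule.add_mem_sup hs hx
    obtain ⟨a, ha, hw⟩ := hGO (s + x) hv𝔫
    set y := πm (Λ (s + x)) with hydef
    have hy𝔪 : y ∈ 𝔪 := hπmem _
    have hσ𝔰 : Λ (s + x) - y ∈ 𝔰.toSubmodule := hπ𝔰 _ (hΛ𝔫 _ hv𝔫)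
    set σ := Λ (s + x) - y with hσdef
    have hΛv : Λ (s + x) = σ + y := by rw [hσdef, sub_add_cancel]
    have h1 : ⁅a, σ⁆ = 0 := skew0 σ a (h𝔰𝔨₁ σ hσ𝔰 a ha)
    have h2 : ⁅s, σ⁆ = 0 := h𝔰ab s hs σ hσ𝔰
    have hexp : ⁅a + (s + x), Λ (s + x)⁆ = ⁅a, y⁆ + ⁅s, y⁆ + ⁅x, σ⁆ + ⁅x, y⁆ := by
      rw [hΛv, add_lie, add_lie, lie_add, lie_add, lie_add, h1, h2]
      abel
    have hKay : killingForm ℝ 𝔤 z ⁅a, y⁆ = 0 :=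
      h𝔪orth z hz𝔨 _ (h𝔪inv a (h𝔨₁𝔨 ha) y hy𝔪)
    have hKsy : killingForm ℝ 𝔤 z ⁅s, y⁆ = 0 :=
      h𝔪orth z hz𝔨 _ (h𝔪inv s (h𝔰𝔨 hs) y hy𝔪)
    have hKxσ : killingForm ℝ 𝔤 z ⁅x, σ⁆ = 0 :=
      h𝔪orth z hz𝔨 _ (skewmem 𝔪 σ x (h𝔪inv σ (h𝔰𝔨 hσ𝔰) x hx))
    have hKw : killingForm ℝ 𝔤 z ⁅a + (s + x), Λ (s + x)⁆ = 0 := hzorth _ hw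
    rw [hexp, map_add, map_add, map_add, hKay, hKsy, hKxσ] at hKw
    linarith
  have hK0 : ∀ x ∈ 𝔪, killingForm ℝ 𝔤 z ⁅x, πm (Λ x)⁆ = 0 := by
    intro x hx
    have := hGOK 0 𝔰.zero_mem x hx
    rwa [zero_add] at this
  have hKm : ∀ s ∈ 𝔰, ∀ x ∈ 𝔪, killingForm ℝ 𝔤 z ⁅x, πm (Λ s)⁆ = 0 := by
    intro s hs x hx
    have h1 := hGOK s hs x hx
    have h2 := hK0 x hx
    have hπadd : πm (Λ (s + x)) = πm (Λ s) + πm (Λ x) := by rw [map_add, map_add]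
    rw [hπadd, lie_add, map_add] at h1
    linarith
  -- Λ preserves 𝔰
  have hΛ𝔰 : ∀ s ∈ 𝔰, Λ s ∈ 𝔰.toSubmodule := by
    intro s hs
    have hs𝔫 : s ∈ 𝔫 := Submodule.mem_sup_left hs
    set ms := πm (Λ s) with hmsdef
    have hms𝔪 : ms ∈ 𝔪 := hπmem _
    have hσ𝔰 : Λ s - ms ∈ 𝔰.toSubmodule := hπ𝔰 _ (hΛ𝔫 s hs𝔫)
    have hk₁ms : ∀ k ∈ 𝔨₁, ⁅k, ms⁆ = 0 := by
      intro k hk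
      have hks : ⁅k, s⁆ = 0 := skew0 s k (h𝔰𝔨₁ s hs k hk)
      have h0 : ⁅k, Λ s⁆ = 0 := by rw [← hΛequiv k hk s hs𝔫, hks, map_zero]
      have h1 : ⁅k, Λ s - ms⁆ = 0 := skew0 _ _ (h𝔰𝔨₁ _ hσ𝔰 k hk)
      have : ⁅k, ms⁆ = ⁅k, Λ s⁆ - ⁅k, Λ s - ms⁆ := by rw [lie_sub]; abel
      rw [this, h0, h1, sub_zero]
    have hzms : ⁅z, ms⁆ = 0 := by
      apply f5 _ (h𝔪inv z hz𝔨 ms hms𝔪)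
      intro x hx
      have h1 := hKm s hs x hx
      have h2 : killingForm ℝ 𝔤 ⁅z, ms⁆ x = killingForm ℝ 𝔤 z ⁅ms, x⁆ := f2 z ms x
      have h3 : ⁅ms, x⁆ = -⁅x, ms⁆ := by rw [← lie_skew x ms, neg_neg]
      rw [h2, h3, map_neg, h1, neg_zero]
    have hszms : ⁅sz, ms⁆ = 0 := by
      have hzms' : ⁅sz, ms⁆ + ⁅bz, ms⁆ = 0 := by rw [← add_lie, hzeq, hzms]
      rw [hk₁ms bz hbz, add_zero] at hzms'
      exact hzms'
    have hms0 : ms = 0 := hJzinj ms hms𝔪 hszms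
    have : Λ s - ms = Λ s := by rw [hms0, sub_zero]
    rw [← this]
    exact hσ𝔰
  -- Λ preserves 𝔪
  have hΛ𝔪 : ∀ x ∈ 𝔪, Λ x ∈ 𝔪 := by
    intro x hx
    have hx𝔫 : x ∈ 𝔫 := Submodule.mem_sup_right hx
    have hσx𝔰 : Λ x - πm (Λ x) ∈ 𝔰.toSubmodule := hπ𝔰 _ (hΛ𝔫 x hx𝔫)
    have hKσs : ∀ s ∈ 𝔰, killingForm ℝ 𝔤 (Λ x - πm (Λ x)) s = 0 := by
      intro s hs
      have h1 : killingForm ℝ 𝔤 (Λ x) s = 0 := by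
        rw [hΛsym x hx𝔫 s (Submodule.mem_sup_left hs), f1]
        exact h𝔪orth (Λ s) (h𝔰𝔨 (hΛ𝔰 s hs)) x hx
      have h2 : killingForm ℝ 𝔤 (πm (Λ x)) s = 0 := by
        rw [f1]
        exact h𝔪orth s (h𝔰𝔨 hs) _ (hπmem _)
      have h3 : killingForm ℝ 𝔤 (Λ x - πm (Λ x)) s
          = killingForm ℝ 𝔤 (Λ x) s - killingForm ℝ 𝔤 (πm (Λ x)) s := by
        rw [map_sub, LinearMap.sub_apply]
      rw [h3, h1, h2, sub_zero]
    have hσx0 : Λ x - πm (Λ x) = 0 := fdef _ (hKσs _ hσx𝔰)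
    have : Λ x = πm (Λ x) := by
      have := sub_eq_zero.mp hσx0
      exact this
    rw [this]
    exact hπmem _
  have hπΛ : ∀ x ∈ 𝔪, πm (Λ x) = Λ x := fun x hx => hπ𝔪 _ (hΛ𝔪 x hx)
  -- polarization and commutation with ad z on 𝔪
  have hpol : ∀ x ∈ 𝔪, ∀ x' ∈ 𝔪,
      killingForm ℝ 𝔤 z ⁅x, Λ x'⁆ + killingForm ℝ 𝔤 z ⁅x', Λ x⁆ = 0 := by
    intro x hx x' hx'
    have hxx' : x + x' ∈ 𝔪 := Submodule.add_mem _ hx hx'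
    have h1 := hK0 (x + x') hxx'
    rw [hπΛ _ hxx', map_add, add_lie, lie_add, lie_add] at h1
    simp only [map_add] at h1
    have hx0 := hK0 x hx
    rw [hπΛ x hx] at hx0
    have hx'0 := hK0 x' hx'
    rw [hπΛ x' hx'] at hx'0
    linarith
  have hcommz : ∀ x ∈ 𝔪, Λ ⁅z, x⁆ = ⁅z, Λ x⁆ := by
    intro x hx
    have hzx𝔪 : ⁅z, x⁆ ∈ 𝔪 := h𝔪inv z hz𝔨 x hx
    have hzΛx𝔪 : ⁅z, Λ x⁆ ∈ 𝔪 := h𝔪inv z hz𝔨 _ (hΛ𝔪 x hx)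
    have key : ∀ x' ∈ 𝔪, killingForm ℝ 𝔤 (Λ ⁅z, x⁆ - ⁅z, Λ x⁆) x' = 0 := by
      intro x' hx'
      have h0 := hpol x hx x' hx'
      have e1 : killingForm ℝ 𝔤 z ⁅x, Λ x'⁆ = killingForm ℝ 𝔤 (Λ ⁅z, x⁆) x' := by
        rw [← f2 z x (Λ x')]
        exact (hΛsym ⁅z, x⁆ (Submodule.mem_sup_right hzx𝔪) x'
          (Submodule.mem_sup_right hx')).symm
      have e2 : killingForm ℝ 𝔤 z ⁅x', Λ x⁆ = -killingForm ℝ 𝔤 ⁅z, Λ x⁆ x' := by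
        rw [← f2 z x' (Λ x), f3 z x' (Λ x), f1 ⁅z, Λ x⁆ x']
      have e3 : killingForm ℝ 𝔤 (Λ ⁅z, x⁆ - ⁅z, Λ x⁆) x'
          = killingForm ℝ 𝔤 (Λ ⁅z, x⁆) x' - killingForm ℝ 𝔤 ⁅z, Λ x⁆ x' := by
        rw [map_sub, LinearMap.sub_apply]
      rw [e3]
      linarith
    exact sub_eq_zero.mp (f5 _ (Submodule.sub_mem _ (hΛ𝔪 _ hzx𝔪) hzΛx𝔪) key)
  have hcommsz : ∀ x ∈ 𝔪, Λ ⁅sz, x⁆ = ⁅sz, Λ x⁆ := by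
    intro x hx
    have h1 := hcommz x hx
    have h2 := hΛequiv bz hbz x (Submodule.mem_sup_right hx)
    have hzx : ⁅z, x⁆ = ⁅sz, x⁆ + ⁅bz, x⁆ := by rw [← hzeq, add_lie]
    have hzΛx : ⁅z, Λ x⁆ = ⁅sz, Λ x⁆ + ⁅bz, Λ x⁆ := by rw [← hzeq, add_lie]
    rw [hzx, map_add, h2, hzΛx] at h1
    exact add_right_cancel h1
  -- all ad s, s ∈ 𝔰, are multiples of ad sz on 𝔪
  have hrel : ∀ s ∈ 𝔰, ∃ r : ℝ, ∀ m ∈ 𝔪, ⁅s, m⁆ = r • ⁅sz, m⁆ := by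
    intro s hs
    obtain ⟨cs, hcs⟩ := hprop s hs
    refine ⟨cs / cz, ?_⟩
    intro m hm
    have h1 := hJprop s hs cs hcs m hm
    have h2 := hJprop sz hsz cz hcz m hm
    have h3 : (cz * c₁) • ⁅s, m⁆ = (cs * c₁) • ⁅sz, m⁆ := by
      rw [mul_smul, mul_smul, h1, h2, smul_comm]
    have hne : cz * c₁ ≠ 0 := mul_ne_zero hczne hc₁ne
    apply smul_right_injective 𝔤 hne
    show (cz * c₁) • ⁅s, m⁆ = (cz * c₁) • ((cs / cz) • ⁅sz, m⁆)
    rw [h3, smul_smul]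
    congr 1
    field_simp
  have hcomm𝔰 : ∀ s ∈ 𝔰, ∀ x ∈ 𝔪, Λ ⁅s, x⁆ = ⁅s, Λ x⁆ := by
    intro s hs x hx
    obtain ⟨r, hr⟩ := hrel s hs
    rw [hr x hx, map_smul, hcommsz x hx, ← hr (Λ x) (hΛ𝔪 x hx)]
  have hcomm𝔨 : ∀ k ∈ 𝔨, ∀ x ∈ 𝔪, Λ ⁅k, x⁆ = ⁅k, Λ x⁆ := by
    intro k hk x hx
    have hk' : k ∈ 𝔰.toSubmodule ⊔ 𝔨₁.toSubmodule := by rw [h𝔨sum]; exact hk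
    obtain ⟨s, hs, b, hb, rfl⟩ := Submodule.mem_sup.mp hk'
    rw [add_lie, map_add, hcomm𝔰 s hs x hx,
      hΛequiv b hb x (Submodule.mem_sup_right hx), add_lie]
  -- Schur: Λ is scalar on 𝔪
  obtain ⟨μ, hμ⟩ := aux_schur hcompact 𝔨 𝔪 hmirr Λ hΛ𝔪
    (fun m hm m' hm' => hΛsym m (Submodule.mem_sup_right hm) m' (Submodule.mem_sup_right hm'))
    hcomm𝔨
  have hμpos : 0 < μ := by
    have h1 := hΛpos mstar (Submodule.mem_sup_right hmstar) hmstar0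
    rw [hμ mstar hmstar] at h1
    have h2 : killingForm ℝ 𝔤 (μ • mstar) mstar = μ * killingForm ℝ 𝔤 mstar mstar := by
      rw [map_smul, LinearMap.smul_apply, smul_eq_mul]
    rw [h2] at h1
    have h3 := hcompact mstar hmstar0
    nlinarith
  -- Λ is also μ on 𝔰
  have hΛ𝔰scal : ∀ s ∈ 𝔰, Λ s = μ • s := by
    intro s hs
    have hΛs𝔰 : Λ s ∈ 𝔰.toSubmodule := hΛ𝔰 s hs
    set d := Λ s - μ • s with hddef
    have hd𝔰 : d ∈ 𝔰.toSubmodule := Submodule.sub_mem _ hΛs𝔰 (Submodule.smul_mem _ _ hs)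
    have hdU : ∀ u ∈ U, ⁅d, u⁆ ∈ U := by
      intro u hu
      have hu𝔪 := hUle hu
      have hv𝔫 : s + u ∈ 𝔫 := Submodule.add_mem_sup hs hu𝔪
      obtain ⟨a, ha, hw⟩ := hGO (s + u) hv𝔫
      have hΛv : Λ (s + u) = Λ s + μ • u := by rw [map_add, hμ u hu𝔪]
      have e1 : ⁅a, Λ s⁆ = 0 := skew0 _ _ (h𝔰𝔨₁ (Λ s) hΛs𝔰 a ha)
      have e2 : ⁅s, Λ s⁆ = 0 := h𝔰ab s hs (Λ s) hΛs𝔰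
      have e3 : ⁅u, Λ s⁆ = -⁅Λ s, u⁆ := by rw [← lie_skew (Λ s) u, neg_neg]
      have e4 : ⁅u, μ • u⁆ = 0 := by rw [lie_smul, lie_self, smul_zero]
      have hw' : ⁅a + (s + u), Λ (s + u)⁆ = μ • ⁅a, u⁆ - ⁅d, u⁆ := by
        rw [hΛv, add_lie, add_lie, lie_add, lie_add, lie_add, e1, e2, e3, e4,
          lie_smul, lie_smul, hddef, sub_lie, smul_lie]
        abel
      have hw𝔪 : μ • ⁅a, u⁆ - ⁅d, u⁆ ∈ 𝔪 :=
        Submodule.sub_mem _ (Submodule.smul_mem _ _ (h𝔪inv a (h𝔨₁𝔨 ha) u hu𝔪))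
          (h𝔪inv d (h𝔰𝔨 hd𝔰) u hu𝔪)
      have hw𝔨 : μ • ⁅a, u⁆ - ⁅d, u⁆ ∈ 𝔨.toSubmodule := by
        rw [← hw']
        exact h𝔨₁𝔨 hw
      have h0 : μ • ⁅a, u⁆ - ⁅d, u⁆ = 0 := by
        have := h𝔪compl.disjoint.le_bot (Submodule.mem_inf.mpr ⟨hw𝔨, hw𝔪⟩)
        simpa using this
      rw [← sub_eq_zero.mp h0]
      exact Submodule.smul_mem _ _ (hUinv a ha u hu)
    by_cases hd0 : d = 0
    · have := sub_eq_zero.mp hd0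
      exact this
    · exfalso
      obtain ⟨rd, hrd⟩ := hrel d hd𝔰
      have hrdne : rd ≠ 0 := by
        intro h
        apply hd0
        apply f11 d hd𝔰
        intro m hm
        rw [hrd m hm, h, zero_smul]
      have hUsz : ∀ u ∈ U, ⁅sz, u⁆ ∈ U := by
        intro u hu
        have heq : ⁅sz, u⁆ = rd⁻¹ • ⁅d, u⁆ := by
          rw [hrd u (hUle hu), smul_smul, inv_mul_cancel₀ hrdne, one_smul]
        rw [heq]
        exact Submodule.smul_mem _ _ (hdU u hu)
      have hUinv𝔨 : AdInvariant 𝔨 U := by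
        intro k hk u hu
        have hk' : k ∈ 𝔰.toSubmodule ⊔ 𝔨₁.toSubmodule := by rw [h𝔨sum]; exact hk
        obtain ⟨s', hs', b, hb, rfl⟩ := Submodule.mem_sup.mp hk'
        rw [add_lie]
        apply Submodule.add_mem
        · obtain ⟨r, hr⟩ := hrel s' hs'
          rw [hr u (hUle hu)]
          exact Submodule.smul_mem _ _ (hUsz u hu)
        · exact hUinv b hb u hu
      rcases hmirr.2.2 U hUle hUinv𝔨 with h | h
      · exact hUne h
      · exact hUne' h
  refine ⟨μ, hμpos, ?_⟩
  intro x hx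
  obtain ⟨σ, hσ, m, hm, rfl⟩ := Submodule.mem_sup.mp hx
  rw [map_add, hΛ𝔰scal σ hσ, hμ m hm, smul_add]


/-- **Theorem 3, part 2)** (Arvanitoyeorgos–Wang–Zhao).
Let `G/K` be a generalized flag manifold whose isotropy representation `𝔪` is irreducible
as an `Ad(K)`-module (`s = 1`), and let `G/K₁` be the corresponding `M`-space.  If `𝔪` is
reducible as an `Ad(K₁)`-module, then `(G/K₁, g)` is a g.o. space if and only if `g` is
the standard metric (generated by `B(·,·)`, up to a positive scale). -/
theorem goMetric_iff_standard_of_isotropy_irreducible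
    {𝔤 : Type*} [LieRing 𝔤] [LieAlgebra ℝ 𝔤] [FiniteDimensional ℝ 𝔤]
    -- `G` is a compact simple Lie group: `𝔤` is simple with negative definite Killing form
    [LieAlgebra.IsSimple ℝ 𝔤]
    (hcompact : ∀ x : 𝔤, x ≠ 0 → killingForm ℝ 𝔤 x x < 0)
    (𝔨 𝔨₁ 𝔰 : LieSubalgebra ℝ 𝔤)
    -- `S` is a torus in `G` and `K = C(S)` is its centralizer
    (h𝔰ab : ∀ x ∈ 𝔰, ∀ y ∈ 𝔰, ⁅x, y⁆ = (0 : 𝔤))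
    (h𝔨cent : ∀ x : 𝔤, x ∈ 𝔨 ↔ ∀ s ∈ 𝔰, ⁅s, x⁆ = 0)
    -- `K = S × K₁`, `K₁` being the semisimple part of `K`
    (h𝔰𝔨 : 𝔰 ≤ 𝔨) (h𝔨₁𝔨 : 𝔨₁ ≤ 𝔨)
    (h𝔨sum : 𝔰.toSubmodule ⊔ 𝔨₁.toSubmodule = 𝔨.toSubmodule)
    (h𝔨disj : Disjoint 𝔰.toSubmodule 𝔨₁.toSubmodule)
    (h𝔰𝔨₁ : ∀ s ∈ 𝔰, ∀ k ∈ 𝔨₁, ⁅s, k⁆ = (0 : 𝔤))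
    (hder : ∀ x ∈ 𝔨, ∀ y ∈ 𝔨, ⁅x, y⁆ ∈ 𝔨₁)
    -- the `B`-orthogonal reductive decomposition `𝔤 = 𝔨 ⊕ 𝔪`, where `B = -Killing form`
    (𝔪 : Submodule ℝ 𝔤)
    (h𝔪compl : IsCompl 𝔨.toSubmodule 𝔪)
    (h𝔪orth : ∀ x ∈ 𝔨, ∀ y ∈ 𝔪, killingForm ℝ 𝔤 x y = 0)
    (h𝔪inv : AdInvariant 𝔨 𝔪)
    -- `𝔪` is irreducible as an `Ad(K)`-module (`s = 1` in the isotropy decomposition)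
    (hmirr : AdIrreducible 𝔨 𝔪)
    -- `𝔪` is reducible as an `Ad(K₁)`-module
    (hred : AdReducible 𝔨₁ 𝔪)
    -- `Λ` is the associated operator of the `G`-invariant metric `g` on the `M`-space
    -- `G/K₁`, whose tangent space at the origin is `𝔫 = 𝔰 ⊕ 𝔪`:
    -- positive definite, symmetric w.r.t. `B = -Killing`, and `Ad(K₁)`-equivariant
    (Λ : 𝔤 →ₗ[ℝ] 𝔤)
    (hΛ𝔫 : ∀ x ∈ 𝔰.toSubmodule ⊔ 𝔪, Λ x ∈ 𝔰.toSubmodule ⊔ 𝔪)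
    (hΛsym : ∀ x ∈ 𝔰.toSubmodule ⊔ 𝔪, ∀ y ∈ 𝔰.toSubmodule ⊔ 𝔪,
      killingForm ℝ 𝔤 (Λ x) y = killingForm ℝ 𝔤 x (Λ y))
    (hΛpos : ∀ x ∈ 𝔰.toSubmodule ⊔ 𝔪, x ≠ 0 → 0 < -(killingForm ℝ 𝔤 (Λ x) x))
    (hΛequiv : ∀ k ∈ 𝔨₁, ∀ x ∈ 𝔰.toSubmodule ⊔ 𝔪, Λ ⁅k, x⁆ = ⁅k, Λ x⁆)
    :
    IsGOMetric 𝔨₁ (𝔰.toSubmodule ⊔ 𝔪) Λ ↔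
      ∃ c : ℝ, 0 < c ∧ ∀ x ∈ 𝔰.toSubmodule ⊔ 𝔪, Λ x = c • x := by
  constructor
  · intro hGO
    obtain ⟨h𝔪inv', U, hUle, hUinv, hUne, hUne'⟩ := hred
    exact aux_forward hcompact 𝔨 𝔨₁ 𝔰 h𝔰ab h𝔨cent h𝔰𝔨 h𝔨₁𝔨 h𝔨sum h𝔨disj h𝔰𝔨₁ hder 𝔪
      h𝔪compl h𝔪orth h𝔪inv hmirr U hUle hUinv hUne hUne' Λ hΛ𝔫 hΛsym hΛpos hΛequiv hGO
  · rintro ⟨c, hc, hΛ⟩ x hx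
    refine ⟨0, 𝔨₁.zero_mem, ?_⟩
    rw [hΛ x hx]
    simp
end

section
/- Let G/K be a generalized flag manifold with isotropy decomposition 𝔪 = 𝔪₁ ⊕ ⋯ ⊕ 𝔪ₛ into pairwise inequivalent irreducible Ad(K)-submodules, and let K = S × K₁. If some irreducible Ad(K)-submodule 𝔪ᵢ (i ∈ {1, …, s}) is reducible as an Ad(K₁)-module, then 𝔪ᵢ decomposes as a direct sum 𝔪ᵢ = 𝔫₁ⁱ ⊕ 𝔫₂ⁱ of exactly two Ad(K₁)-invariant irreducible submodules, and 𝔫₁ⁱ and 𝔫₂ⁱ are equivalent as Ad(K₁)-modules. -/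
open Module

section AuxiliaryLemmas

open Polynomial

variable {E : Type*} [AddCommGroup E] [Module ℝ E]

private lemma commute_aeval' (S g : Module.End ℝ E) (h : Commute g S) (p : ℝ[X]) :
    Commute g (Polynomial.aeval S p) := by
  induction p using Polynomial.induction_on' with
  | add p q hp hq => rw [map_add]; exact hp.add_right hq
  | monomial n a =>
    rw [Polynomial.aeval_monomial]
    exact ((Algebra.commute_algebraMap_left a g).symm).mul_right (h.pow_right n)

/-- A Schur-type lemma: a symmetric (w.r.t. a positive definite form) endomorphism commuting
with an irreducible family of operators is a scalar. -/
private lemma scalar_lemma' [FiniteDimensional ℝ E]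
    (hE : ∃ v : E, v ≠ 0)
    (Bf : E →ₗ[ℝ] E →ₗ[ℝ] ℝ) (hBpos : ∀ x : E, x ≠ 0 → 0 < Bf x x)
    (𝒜 : Set (Module.End ℝ E))
    (hirr : ∀ N : Submodule ℝ E, (∀ g ∈ 𝒜, ∀ v ∈ N, g v ∈ N) → N = ⊥ ∨ N = ⊤)
    (S : Module.End ℝ E) (hcomm : ∀ g ∈ 𝒜, Commute g S)
    (hsymm : ∀ x y, Bf (S x) y = Bf x (S y)) :
    ∃ μ : ℝ, S = μ • (1 : Module.End ℝ E) := by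
  obtain ⟨v₀, hv₀⟩ := hE
  haveI : Nontrivial E := ⟨v₀, 0, hv₀⟩
  have hint : IsIntegral ℝ S := LinearMap.isIntegral S
  have hpne : minpoly ℝ S ≠ 0 := minpoly.ne_zero hint
  have hpnu : ¬ IsUnit (minpoly ℝ S) := minpoly.not_isUnit ℝ S
  obtain ⟨q, hqirr, hqdvd⟩ := WfDvdMonoid.exists_irreducible_factor hpnu hpne
  obtain ⟨r, hr⟩ := hqdvd
  have hkerinv : ∀ (T : Module.End ℝ E), (∀ g ∈ 𝒜, Commute g T) →
      LinearMap.ker T = ⊥ ∨ LinearMap.ker T = ⊤ := by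
    intro T hcT
    refine hirr _ (fun g hg v hv => ?_)
    rw [LinearMap.mem_ker] at hv ⊢
    have h6 := congrArg (fun (U : Module.End ℝ E) => U v) (hcT g hg).eq
    simp only [Module.End.mul_apply] at h6
    rw [hv, map_zero] at h6
    exact h6.symm
  have hq0 : Polynomial.aeval S q = 0 := by
    have hker : LinearMap.ker (Polynomial.aeval S q) ≠ ⊥ := by
      intro hbot
      have hinj : Function.Injective (Polynomial.aeval S q) := LinearMap.ker_eq_bot.mp hbot
      have h0 : Polynomial.aeval S (minpoly ℝ S) = 0 := minpoly.aeval ℝ S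
      have hmul : Polynomial.aeval S q * Polynomial.aeval S r = 0 := by
        rw [← map_mul, ← hr, h0]
      have hr0 : Polynomial.aeval S r = 0 := by
        ext x
        have h1 : (Polynomial.aeval S q) ((Polynomial.aeval S r) x) = 0 := by
          have := congrArg (fun (T : Module.End ℝ E) => T x) hmul
          simpa [Module.End.mul_apply] using this
        have h2 : (Polynomial.aeval S q) ((Polynomial.aeval S r) x)
            = (Polynomial.aeval S q) 0 := by simpa using h1
        simpa using hinj h2
      have hrne : r ≠ 0 := by
        intro h; rw [h, mul_zero] at hr; exact hpne hr
      have hqne : q ≠ 0 := hqirr.ne_zero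
      have h1 : (minpoly ℝ S).natDegree ≤ r.natDegree :=
        Polynomial.natDegree_le_of_dvd (minpoly.dvd ℝ S hr0) hrne
      have h2 : (minpoly ℝ S).natDegree = q.natDegree + r.natDegree := by
        rw [hr, Polynomial.natDegree_mul hqne hrne]
      have h3 : 0 < q.natDegree := hqirr.natDegree_pos
      omega
    rcases hkerinv (Polynomial.aeval S q)
        (fun g hg => commute_aeval' S g (hcomm g hg) q) with h | h
    · exact absurd h hker
    · ext x
      have hx : x ∈ LinearMap.ker (Polynomial.aeval S q) := h ▸ Submodule.mem_top
      simpa using hx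
  have hd2 : q.natDegree ≤ 2 := hqirr.natDegree_le_two
  have hd1 : 0 < q.natDegree := hqirr.natDegree_pos
  have hexp : (0 : Module.End ℝ E)
      = ∑ k ∈ Finset.range (q.natDegree + 1), q.coeff k • S ^ k := by
    rw [← Polynomial.aeval_eq_sum_range, hq0]
  rcases (by omega : q.natDegree = 1 ∨ q.natDegree = 2) with hq1 | hq2
  · -- linear case
    rw [hq1] at hexp
    rw [Finset.sum_range_succ, Finset.sum_range_succ, Finset.sum_range_zero, zero_add,
      pow_zero, pow_one] at hexp
    have ha : q.coeff 1 ≠ 0 := by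
      have := Polynomial.leadingCoeff_ne_zero.mpr hqirr.ne_zero
      rwa [Polynomial.leadingCoeff, hq1] at this
    have h4 : q.coeff 1 • S = -(q.coeff 0 • (1 : Module.End ℝ E)) :=
      eq_neg_of_add_eq_zero_right hexp.symm
    refine ⟨(q.coeff 1)⁻¹ * -(q.coeff 0), ?_⟩
    have h5 := congrArg (fun T : Module.End ℝ E => (q.coeff 1)⁻¹ • T) h4
    simp only [smul_smul, smul_neg] at h5
    rw [inv_mul_cancel₀ ha, one_smul] at h5
    rw [h5]
    module
  · -- quadratic case
    rw [hq2] at hexp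
    rw [Finset.sum_range_succ, Finset.sum_range_succ, Finset.sum_range_succ,
      Finset.sum_range_zero, zero_add, pow_zero, pow_one] at hexp
    have ha : q.coeff 2 ≠ 0 := by
      have := Polynomial.leadingCoeff_ne_zero.mpr hqirr.ne_zero
      rwa [Polynomial.leadingCoeff, hq2] at this
    set b : ℝ := (q.coeff 2)⁻¹ * q.coeff 1 with hb
    set c : ℝ := (q.coeff 2)⁻¹ * q.coeff 0 with hc
    have hSS : S * S = (-c) • (1 : Module.End ℝ E) + (-b) • S := by
      have h4 : q.coeff 2 • S ^ 2 = -(q.coeff 0 • (1 : Module.End ℝ E) + q.coeff 1 • S) :=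
        eq_neg_of_add_eq_zero_right hexp.symm
      have h5 := congrArg (fun T : Module.End ℝ E => (q.coeff 2)⁻¹ • T) h4
      simp only [smul_smul, smul_neg, smul_add] at h5
      rw [inv_mul_cancel₀ ha, one_smul] at h5
      rw [← pow_two, h5, neg_add]
      congr 1 <;> rw [neg_smul]
    set e : ℝ := b / 2 with he
    set M : Module.End ℝ E := S + e • 1 with hM
    set d : ℝ := e * e - c with hd
    have hsymM : ∀ x y, Bf (M x) y = Bf x (M y) := by
      intro x y
      simp only [hM, LinearMap.add_apply, LinearMap.smul_apply, Module.End.one_apply,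
        map_add, map_smul, LinearMap.add_apply, LinearMap.smul_apply]
      rw [hsymm]
    have hMM : M * M = d • (1 : Module.End ℝ E) := by
      have hexpand : M * M = S * S + (2 * e) • S + (e * e) • 1 := by
        simp only [hM, mul_add, add_mul, smul_mul_assoc, mul_smul_comm, one_mul, mul_one,
          smul_smul]
        module
      rw [hexpand, hSS, hd]
      module
    rcases lt_or_ge d 0 with hdneg | hdpos
    · exfalso
      have h7 : Bf (M v₀) (M v₀) = d * Bf v₀ v₀ := by
        rw [hsymM]
        have h8 : M (M v₀) = d • v₀ := by
          rw [← Module.End.mul_apply, hMM]; simp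
        rw [h8]; simp
      have h8 : 0 < Bf v₀ v₀ := hBpos v₀ hv₀
      have h9 : 0 ≤ Bf (M v₀) (M v₀) := by
        rcases eq_or_ne (M v₀) 0 with h | h
        · simp [h]
        · exact (hBpos _ h).le
      nlinarith
    · set t : ℝ := Real.sqrt d with ht
      have htt : t * t = d := Real.mul_self_sqrt hdpos
      set N : Module.End ℝ E := M - t • 1 with hN
      set N' : Module.End ℝ E := M + t • 1 with hN'
      have hNN' : N * N' = 0 := by
        have hexpand : N * N' = M * M - (t * t) • 1 := by
          simp only [hN, hN', mul_add, sub_mul, smul_mul_assoc, mul_smul_comm, one_mul, mul_one,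
            smul_smul]
          module
        rw [hexpand, hMM, htt]
        module
      have hcommM : ∀ g ∈ 𝒜, Commute g M :=
        fun g hg => (hcomm g hg).add_right ((Commute.one_right g).smul_right e)
      have hcommN : ∀ g ∈ 𝒜, Commute g N :=
        fun g hg => (hcommM g hg).sub_right ((Commute.one_right g).smul_right t)
      have hcommN' : ∀ g ∈ 𝒜, Commute g N' :=
        fun g hg => (hcommM g hg).add_right ((Commute.one_right g).smul_right t)
      have hscal : ∀ u : ℝ, M = u • (1 : Module.End ℝ E) →
          ∃ μ : ℝ, S = μ • (1 : Module.End ℝ E) := by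
        intro u hu
        refine ⟨u - e, ?_⟩
        have hS : S = M - e • 1 := by rw [hM]; abel
        rw [hS, hu, sub_smul]
      rcases hkerinv N hcommN with h | h
      · rcases hkerinv N' hcommN' with h' | h'
        · exfalso
          have hinj : Function.Injective N' := LinearMap.ker_eq_bot.mp h'
          have hsurj : Function.Surjective N' := LinearMap.injective_iff_surjective.mp hinj
          have hN0 : N = 0 := by
            ext y
            obtain ⟨x, hx⟩ := hsurj y
            rw [← hx, ← Module.End.mul_apply, hNN']
            rfl
          rw [hN0, LinearMap.ker_zero] at h
          simp at h
        · have hN'0 : N' = 0 := LinearMap.ker_eq_top.mp h'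
          refine hscal (-t) ?_
          have h10 : M = -(t • (1 : Module.End ℝ E)) := eq_neg_of_add_eq_zero_left hN'0
          rw [h10, neg_smul]
      · have hN0 : N = 0 := LinearMap.ker_eq_top.mp h
        exact hscal t (sub_eq_zero.mp hN0)

/-- Every nonzero invariant submodule contains a minimal (irreducible) one. -/
private lemma exists_min_invariant {𝔤 : Type*} [LieRing 𝔤] [LieAlgebra ℝ 𝔤]
    [FiniteDimensional ℝ 𝔤]
    (k : LieSubalgebra ℝ 𝔤) (U : Submodule ℝ 𝔤) (hUinv : AdInvariant k U) (hUne : U ≠ ⊥) :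
    ∃ n, n ≤ U ∧ AdInvariant k n ∧ n ≠ ⊥ ∧
      ∀ V : Submodule ℝ 𝔤, V ≤ n → AdInvariant k V → V = ⊥ ∨ V = n := by
  suffices h : ∀ d : ℕ, ∀ U : Submodule ℝ 𝔤, finrank ℝ U = d → AdInvariant k U → U ≠ ⊥ →
      ∃ n, n ≤ U ∧ AdInvariant k n ∧ n ≠ ⊥ ∧
        ∀ V : Submodule ℝ 𝔤, V ≤ n → AdInvariant k V → V = ⊥ ∨ V = n by
    exact h (finrank ℝ U) U rfl hUinv hUne
  intro d
  induction d using Nat.strong_induction_on with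
  | _ d ih =>
    intro U hd hUinv hUne
    by_cases h : ∀ V : Submodule ℝ 𝔤, V ≤ U → AdInvariant k V → V = ⊥ ∨ V = U
    · exact ⟨U, le_rfl, hUinv, hUne, h⟩
    · push_neg at h
      obtain ⟨V, hVU, hVinv, hVne, hVneU⟩ := h
      have hlt : finrank ℝ V < d := by
        rw [← hd]
        exact Submodule.finrank_lt_finrank_of_lt (lt_of_le_of_ne hVU hVneU)
      obtain ⟨n, hn1, hn2, hn3, hn4⟩ := ih _ hlt V rfl hVinv hVne
      exact ⟨n, hn1.trans hVU, hn2, hn3, hn4⟩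

end AuxiliaryLemmas

set_option maxHeartbeats 4000000 in
/-- **Lemma 2** (Arvanitoyeorgos–Wang–Zhao).
Let `G/K` be a generalized flag manifold with isotropy decomposition
`𝔪 = 𝔪₁ ⊕ ⋯ ⊕ 𝔪ₛ` into pairwise inequivalent irreducible `Ad(K)`-submodules, and
`K = S × K₁`.  If some `𝔪ᵢ` is reducible as an `Ad(K₁)`-module, then
`𝔪ᵢ = 𝔫₁ⁱ ⊕ 𝔫₂ⁱ` for exactly two `Ad(K₁)`-invariant irreducible submodules `𝔫₁ⁱ, 𝔫₂ⁱ`,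
which are moreover equivalent as `Ad(K₁)`-modules. -/
theorem reducible_summand_splits_into_two_equivalent_irreducibles
    {𝔤 : Type*} [LieRing 𝔤] [LieAlgebra ℝ 𝔤] [FiniteDimensional ℝ 𝔤]
    -- `G` is a compact simple Lie group: `𝔤` is simple with negative definite Killing form
    [LieAlgebra.IsSimple ℝ 𝔤]
    (hcompact : ∀ x : 𝔤, x ≠ 0 → killingForm ℝ 𝔤 x x < 0)
    (𝔨 𝔨₁ 𝔰 : LieSubalgebra ℝ 𝔤)
    -- `S` is a torus in `G` and `K = C(S)` is its centralizer
    (h𝔰ab : ∀ x ∈ 𝔰, ∀ y ∈ 𝔰, ⁅x, y⁆ = (0 : 𝔤))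
    (h𝔨cent : ∀ x : 𝔤, x ∈ 𝔨 ↔ ∀ s ∈ 𝔰, ⁅s, x⁆ = 0)
    -- `K = S × K₁`, `K₁` being the semisimple part of `K`
    (h𝔰𝔨 : 𝔰 ≤ 𝔨) (h𝔨₁𝔨 : 𝔨₁ ≤ 𝔨)
    (h𝔨sum : 𝔰.toSubmodule ⊔ 𝔨₁.toSubmodule = 𝔨.toSubmodule)
    (h𝔨disj : Disjoint 𝔰.toSubmodule 𝔨₁.toSubmodule)
    (h𝔰𝔨₁ : ∀ s ∈ 𝔰, ∀ k ∈ 𝔨₁, ⁅s, k⁆ = (0 : 𝔤))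
    (hder : ∀ x ∈ 𝔨, ∀ y ∈ 𝔨, ⁅x, y⁆ ∈ 𝔨₁)
    -- the `B`-orthogonal reductive decomposition `𝔤 = 𝔨 ⊕ 𝔪`, where `B = -Killing form`
    (𝔪 : Submodule ℝ 𝔤)
    (h𝔪compl : IsCompl 𝔨.toSubmodule 𝔪)
    (h𝔪orth : ∀ x ∈ 𝔨, ∀ y ∈ 𝔪, killingForm ℝ 𝔤 x y = 0)
    (h𝔪inv : AdInvariant 𝔨 𝔪)
    -- the decomposition `𝔪 = 𝔪₁ ⊕ ⋯ ⊕ 𝔪ₛ`, `B`-orthogonal, into pairwise inequivalent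
    -- irreducible `Ad(K)`-submodules
    (s : ℕ) (m : Fin s → Submodule ℝ 𝔤)
    (hmsub : ∀ i, m i ≤ 𝔪)
    (hmsum : ⨆ i, m i = 𝔪)
    (hmorth : ∀ i j, i ≠ j → ∀ x ∈ m i, ∀ y ∈ m j, killingForm ℝ 𝔤 x y = 0)
    (hmirr : ∀ i, AdIrreducible 𝔨 (m i))
    (hmineq : ∀ i j, i ≠ j → ¬ AdEquiv 𝔨 (m i) (m j))
    -- `𝔪ᵢ` is reducible as an `Ad(K₁)`-module
    (i : Fin s) (hred : AdReducible 𝔨₁ (m i)) :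
    ∃ n₁ n₂ : Submodule ℝ 𝔤,
      n₁ ≤ m i ∧ n₂ ≤ m i ∧
      AdIrreducible 𝔨₁ n₁ ∧ AdIrreducible 𝔨₁ n₂ ∧
      Disjoint n₁ n₂ ∧ n₁ ⊔ n₂ = m i ∧
      AdEquiv 𝔨₁ n₁ n₂ := by
  classical
  obtain ⟨hMiInv, hMine, hMimin⟩ := hmirr i
  set Mi := m i with hMidef
  -- the family of operators on `Mi` induced by the adjoint action of `𝔨`
  have hmapz : ∀ z : 𝔨, ∀ x ∈ Mi, (LieAlgebra.ad ℝ 𝔤 (z : 𝔤)) x ∈ Mi := by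
    intro z x hx
    rw [LieAlgebra.ad_apply]
    exact hMiInv z z.2 x hx
  set op : 𝔨 → Module.End ℝ Mi :=
    fun z => ((LieAlgebra.ad ℝ 𝔤 (z : 𝔤)) : 𝔤 →ₗ[ℝ] 𝔤).restrict (hmapz z) with hop
  have hopapply : ∀ (z : 𝔨) (v : Mi), ((op z v : Mi) : 𝔤) = ⁅(z : 𝔤), (v : 𝔤)⁆ := by
    intro z v
    rw [hop]
    simp [LinearMap.restrict_apply, LieAlgebra.ad_apply]
  set 𝒜 : Set (Module.End ℝ Mi) := Set.range op with h𝒜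
  -- irreducibility of `Mi` as a module over this family
  have hirrE : ∀ N : Submodule ℝ Mi, (∀ g ∈ 𝒜, ∀ v ∈ N, g v ∈ N) → N = ⊥ ∨ N = ⊤ := by
    intro N hN
    have hU : AdInvariant 𝔨 (N.map Mi.subtype) := by
      intro x hx w hw
      obtain ⟨v, hv, rfl⟩ := Submodule.mem_map.mp hw
      refine Submodule.mem_map.mpr ⟨op ⟨x, hx⟩ v, hN _ ⟨⟨x, hx⟩, rfl⟩ v hv, ?_⟩
      rw [Submodule.coe_subtype, hopapply]
    rcases hMimin _ (Submodule.map_subtype_le Mi N) hU with h | h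
    · left
      exact Submodule.map_injective_of_injective Mi.injective_subtype
        (by rw [h, Submodule.map_bot])
    · right
      exact Submodule.map_injective_of_injective Mi.injective_subtype
        (by rw [h, Submodule.map_subtype_top])
  -- the positive definite form `B = -Killing` restricted to `Mi`
  set Bf : Mi →ₗ[ℝ] Mi →ₗ[ℝ] ℝ :=
    (-(killingForm ℝ 𝔤)).compl₁₂ Mi.subtype Mi.subtype with hBf
  have hBfapply : ∀ x y : Mi, Bf x y = -(killingForm ℝ 𝔤 (x : 𝔤) (y : 𝔤)) := by
    intro x y
    rw [hBf, LinearMap.compl₁₂_apply]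
    simp
  have hBpos : ∀ x : Mi, x ≠ 0 → 0 < Bf x x := by
    intro x hx
    rw [hBfapply]
    have hx' : (x : 𝔤) ≠ 0 := fun h => hx (Subtype.ext h)
    linarith [hcompact (x : 𝔤) hx']
  -- each `op z` is skew-symmetric w.r.t. `Bf`
  have hskew𝔤 : ∀ z x y : 𝔤, killingForm ℝ 𝔤 ⁅z, x⁆ y = -(killingForm ℝ 𝔤 x ⁅z, y⁆) :=
    fun z x y => LieModule.traceForm_apply_lie_apply' ℝ 𝔤 𝔤 z x y
  have hopskew : ∀ z : 𝔨, ∀ x y : Mi, Bf (op z x) y = -(Bf x (op z y)) := by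
    intro z x y
    rw [hBfapply, hBfapply, hopapply, hopapply, hskew𝔤]
  -- operators coming from commuting elements commute
  have hopcomm : ∀ z w : 𝔨, ⁅(z : 𝔤), (w : 𝔤)⁆ = 0 → Commute (op z) (op w) := by
    intro z w hzw
    apply LinearMap.ext
    intro v
    apply Subtype.ext
    show ((op z) ((op w) v) : 𝔤) = ((op w) ((op z) v) : 𝔤)
    rw [hopapply, hopapply, hopapply, hopapply, leibniz_lie, hzw, zero_lie, zero_add]
  have hcent : ∀ s' : 𝔤, s' ∈ 𝔰 → ∀ z : 𝔨, ⁅(z : 𝔤), s'⁆ = 0 := by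
    intro s' hs' z
    have h1 := (h𝔨cent (z : 𝔤)).mp z.2 s' hs'
    rw [← lie_skew, h1, neg_zero]
  -- `Mi` is nontrivial
  have hE : ∃ v : Mi, v ≠ 0 := by
    obtain ⟨x, hx, hx0⟩ := Submodule.exists_mem_ne_zero_of_ne_bot hMine
    exact ⟨⟨x, hx⟩, fun h => hx0 (congrArg Subtype.val h)⟩
  -- choose an element of the torus acting nontrivially on `Mi`
  have hs0 : ∃ s₀ : 𝔤, ∃ hs₀ : s₀ ∈ 𝔰, ∃ x ∈ Mi, ⁅s₀, x⁆ ≠ 0 := by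
    by_contra hcon
    push_neg at hcon
    have hsub : Mi ≤ 𝔨.toSubmodule := by
      intro x hx
      exact (h𝔨cent x).mpr (fun s' hs' => hcon s' hs' x hx)
    have hbot : Mi ≤ ⊥ := le_trans (le_inf hsub (hmsub i)) h𝔪compl.disjoint.le_bot
    exact hMine (le_bot_iff.mp hbot)
  obtain ⟨s₀, hs₀, x₀g, hx₀g, hx₀ne⟩ := hs0
  set z₀ : 𝔨 := (⟨s₀, h𝔰𝔨 hs₀⟩ : 𝔨) with hz₀
  set D : Module.End ℝ Mi := op z₀ with hD
  set x₀ : Mi := ⟨x₀g, hx₀g⟩ with hx₀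
  have hDx₀ : D x₀ ≠ 0 := by
    intro h
    apply hx₀ne
    have h1 := congrArg (Subtype.val : Mi → 𝔤) h
    rw [hD, hopapply] at h1
    exact h1
  have hDcomm : ∀ g ∈ 𝒜, Commute g D := by
    rintro g ⟨z, rfl⟩
    exact hopcomm z z₀ (hcent s₀ hs₀ z)
  -- `D ∘ D` is a negative scalar
  obtain ⟨μ, hμ⟩ := scalar_lemma' hE Bf hBpos 𝒜 hirrE (D * D)
    (fun g hg => (hDcomm g hg).mul_right (hDcomm g hg))
    (by
      intro x y
      simp only [Module.End.mul_apply]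
      calc Bf (D (D x)) y = -(Bf (D x) (D y)) := hopskew z₀ (D x) y
        _ = -(-(Bf x (D (D y)))) := by rw [hopskew z₀ x (D y)]
        _ = Bf x (D (D y)) := neg_neg _)
  have hx₀ne0 : x₀ ≠ 0 := by
    intro h
    apply hDx₀
    rw [h, map_zero]
  have hDDx₀ : D (D x₀) = μ • x₀ := by
    rw [← Module.End.mul_apply, hμ]
    simp
  have hμneg : μ < 0 := by
    have h1 : Bf (D x₀) (D x₀) = -(Bf x₀ (D (D x₀))) := hopskew z₀ x₀ (D x₀)
    rw [hDDx₀, map_smul] at h1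
    have h2 : 0 < Bf (D x₀) (D x₀) := hBpos _ hDx₀
    have h3 : 0 < Bf x₀ x₀ := hBpos _ hx₀ne0
    simp only [smul_eq_mul] at h1
    nlinarith
  set lam : ℝ := Real.sqrt (-μ) with hlam
  have hlampos : 0 < lam := Real.sqrt_pos.mpr (by linarith)
  have hlamsq : lam * lam = -μ := Real.mul_self_sqrt (by linarith)
  set J : Module.End ℝ Mi := lam⁻¹ • D with hJ
  have hJJ : J * J = -1 := by
    have h1 : J * J = (lam⁻¹ * (lam⁻¹ * μ)) • (1 : Module.End ℝ Mi) := by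
      rw [hJ, smul_mul_assoc, mul_smul_comm, hμ, smul_smul, smul_smul, mul_assoc]
    rw [h1]
    have h2 : lam⁻¹ * (lam⁻¹ * μ) = -1 := by
      rw [← mul_assoc, ← mul_inv, hlamsq, inv_neg, neg_mul, inv_mul_cancel₀ (ne_of_lt hμneg)]
    rw [h2]
    exact neg_one_smul ℝ (1 : Module.End ℝ Mi)
  have hJcomm : ∀ g ∈ 𝒜, Commute g J := fun g hg => (hDcomm g hg).smul_right lam⁻¹
  have hJskew : ∀ x y : Mi, Bf (J x) y = -(Bf x (J y)) := by
    intro x y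
    rw [hJ]
    simp only [LinearMap.smul_apply, map_smul, LinearMap.smul_apply, smul_eq_mul]
    rw [hopskew z₀ x y]
    ring
  -- every torus element acts on `Mi` as a multiple of `J`
  have hsscal : ∀ s' : 𝔤, ∀ hs' : s' ∈ 𝔰, ∃ c : ℝ, op ⟨s', h𝔰𝔨 hs'⟩ = c • J := by
    intro s' hs'
    set z' : 𝔨 := (⟨s', h𝔰𝔨 hs'⟩ : 𝔨) with hz'
    have hTD : Commute (op z') D := hopcomm z' z₀ (h𝔰ab s' hs' s₀ hs₀)
    have hTJ : Commute (op z') J := hTD.smul_right lam⁻¹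
    obtain ⟨μ', hμ'⟩ := scalar_lemma' hE Bf hBpos 𝒜 hirrE (op z' * J)
      (fun g hg => by
        obtain ⟨z, rfl⟩ := hg
        exact (hopcomm z z' (hcent s' hs' z)).mul_right (hJcomm _ ⟨z, rfl⟩))
      (by
        intro x y
        simp only [Module.End.mul_apply]
        calc Bf (op z' (J x)) y = -(Bf (J x) (op z' y)) := hopskew z' (J x) y
          _ = -(-(Bf x (J (op z' y)))) := by rw [hJskew x (op z' y)]
          _ = Bf x (J (op z' y)) := neg_neg _
          _ = Bf x (op z' (J y)) := by
              have h3 := congrArg (fun T : Module.End ℝ Mi => T y) hTJ.eq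
              simp only [Module.End.mul_apply] at h3
              rw [← h3])
    refine ⟨-μ', ?_⟩
    have h3 : op z' * J * J = μ' • J := by
      rw [hμ', smul_mul_assoc, one_mul]
    rw [mul_assoc, hJJ] at h3
    have h3' : -(op z') = μ' • J := by
      rw [← h3]
      exact (mul_neg_one (op z')).symm
    have h4 : op z' = -(μ' • J) := neg_eq_iff_eq_neg.mp h3'
    exact h4.trans (neg_smul μ' J).symm
  -- the ambient linear map `f` realizing `J`
  obtain ⟨W, hW⟩ := Submodule.exists_isCompl Mi
  set pr : 𝔤 →ₗ[ℝ] Mi := Mi.linearProjOfIsCompl W hW with hpr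
  set f : 𝔤 →ₗ[ℝ] 𝔤 := Mi.subtype ∘ₗ (J : Mi →ₗ[ℝ] Mi) ∘ₗ pr with hfdef
  have hfu : ∀ (u : 𝔤) (hu : u ∈ Mi), f u = ((J ⟨u, hu⟩ : Mi) : 𝔤) := by
    intro u hu
    have h1 : pr u = ⟨u, hu⟩ := Submodule.linearProjOfIsCompl_apply_left hW ⟨u, hu⟩
    rw [hfdef]
    simp only [LinearMap.coe_comp, Function.comp_apply, h1]
    rfl
  have hfMi : ∀ u ∈ Mi, f u ∈ Mi := by
    intro u hu
    rw [hfu u hu]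
    exact (J ⟨u, hu⟩).2
  have hff : ∀ u ∈ Mi, f (f u) = -u := by
    intro u hu
    rw [hfu u hu, hfu _ (J ⟨u, hu⟩).2]
    have h2 : J (J ⟨u, hu⟩) = (-1 : Module.End ℝ Mi) ⟨u, hu⟩ := by
      rw [← Module.End.mul_apply, hJJ]
    rw [Subtype.coe_eta, h2]
    simp
  have hfinj : ∀ u ∈ Mi, f u = 0 → u = 0 := by
    intro u hu h
    have h1 := hff u hu
    rw [h, map_zero] at h1
    exact neg_eq_zero.mp h1.symm
  have hfbr : ∀ x ∈ 𝔨, ∀ u ∈ Mi, f ⁅x, u⁆ = ⁅x, f u⁆ := by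
    intro x hx u hu
    have hxu : ⁅x, u⁆ ∈ Mi := hMiInv x hx u hu
    rw [hfu _ hxu, hfu u hu]
    have h1 : (⟨⁅x, u⁆, hxu⟩ : Mi) = op ⟨x, hx⟩ ⟨u, hu⟩ :=
      Subtype.ext (by rw [hopapply])
    rw [h1]
    have h2 : J (op ⟨x, hx⟩ ⟨u, hu⟩) = op ⟨x, hx⟩ (J ⟨u, hu⟩) := by
      have h3 := congrArg (fun T : Module.End ℝ Mi => T ⟨u, hu⟩)
        (hJcomm (op ⟨x, hx⟩) ⟨⟨x, hx⟩, rfl⟩).eq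
      simp only [Module.End.mul_apply] at h3
      exact h3.symm
    rw [h2, hopapply]
  have hfs : ∀ s' ∈ 𝔰, ∃ c : ℝ, ∀ u ∈ Mi, ⁅s', u⁆ = c • f u := by
    intro s' hs'
    obtain ⟨c, hc⟩ := hsscal s' hs'
    refine ⟨c, fun u hu => ?_⟩
    have h1 : ⁅s', u⁆ = ((op ⟨s', h𝔰𝔨 hs'⟩ ⟨u, hu⟩ : Mi) : 𝔤) := (hopapply ⟨s', h𝔰𝔨 hs'⟩ ⟨u, hu⟩).symm
    rw [h1, hc, hfu u hu]
    simp
  -- submodule-level consequences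
  have hmapff : ∀ V : Submodule ℝ 𝔤, V ≤ Mi → Submodule.map f (Submodule.map f V) = V := by
    intro V hV
    apply le_antisymm
    · rintro w hw
      obtain ⟨v1, hv1, rfl⟩ := Submodule.mem_map.mp hw
      obtain ⟨v, hv, rfl⟩ := Submodule.mem_map.mp hv1
      rw [hff v (hV hv)]
      exact V.neg_mem hv
    · intro v hv
      have h1 : v = f (f (-v)) := by
        rw [map_neg, map_neg, hff v (hV hv), neg_neg]
      rw [h1]
      exact Submodule.mem_map_of_mem (Submodule.mem_map_of_mem (V.neg_mem hv))
  have hmaple : ∀ V : Submodule ℝ 𝔤, V ≤ Mi → Submodule.map f V ≤ Mi := by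
    rintro V hV w hw
    obtain ⟨v, hv, rfl⟩ := Submodule.mem_map.mp hw
    exact hfMi v (hV hv)
  have hmapinv : ∀ V : Submodule ℝ 𝔤, V ≤ Mi → AdInvariant 𝔨₁ V →
      AdInvariant 𝔨₁ (Submodule.map f V) := by
    intro V hV hVinv x hx w hw
    obtain ⟨v, hv, rfl⟩ := Submodule.mem_map.mp hw
    rw [← hfbr x (h𝔨₁𝔨 hx) v (hV hv)]
    exact Submodule.mem_map_of_mem (hVinv x hx v hv)
  have hkinv : ∀ V : Submodule ℝ 𝔤, V ≤ Mi → AdInvariant 𝔨₁ V →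
      Submodule.map f V ≤ V → AdInvariant 𝔨 V := by
    intro V hV hVinv hVf x hx w hw
    have hx' : x ∈ 𝔰.toSubmodule ⊔ 𝔨₁.toSubmodule := by rw [h𝔨sum]; exact hx
    obtain ⟨a, ha, b, hb, rfl⟩ := Submodule.mem_sup.mp hx'
    rw [add_lie]
    refine V.add_mem ?_ (hVinv b hb w hw)
    obtain ⟨c, hc⟩ := hfs a ha
    rw [hc w (hV hw)]
    exact V.smul_mem c (hVf (Submodule.mem_map_of_mem hw))
  -- construct the two summands
  obtain ⟨-, U, hUle, hUinv, hUne, hUneMi⟩ := hred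
  obtain ⟨n₁, hn₁U, hn₁inv, hn₁ne, hn₁min⟩ := exists_min_invariant 𝔨₁ U hUinv hUne
  have hn₁Mi : n₁ ≤ Mi := hn₁U.trans hUle
  have hn₁neMi : n₁ ≠ Mi := by
    intro h
    exact hUneMi (le_antisymm hUle (h ▸ hn₁U))
  set n₂ : Submodule ℝ 𝔤 := Submodule.map f n₁ with hn₂
  have hn₂Mi : n₂ ≤ Mi := hmaple n₁ hn₁Mi
  have hn₂inv : AdInvariant 𝔨₁ n₂ := hmapinv n₁ hn₁Mi hn₁inv
  have hn₂ne : n₂ ≠ ⊥ := by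
    intro h
    obtain ⟨x, hx, hx0⟩ := Submodule.exists_mem_ne_zero_of_ne_bot hn₁ne
    have h1 : f x ∈ n₂ := Submodule.mem_map_of_mem hx
    rw [h, Submodule.mem_bot] at h1
    exact hx0 (hfinj x (hn₁Mi hx) h1)
  have hmapn₂ : Submodule.map f n₂ = n₁ := hmapff n₁ hn₁Mi
  have hn₂irr : AdIrreducible 𝔨₁ n₂ := by
    refine ⟨hn₂inv, hn₂ne, fun V hVle hVinv => ?_⟩
    have hVMi : V ≤ Mi := hVle.trans hn₂Mi
    have h1 : Submodule.map f V ≤ n₁ := by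
      rw [← hmapn₂]
      exact Submodule.map_mono hVle
    rcases hn₁min (Submodule.map f V) h1 (hmapinv V hVMi hVinv) with h | h
    · left
      rw [← hmapff V hVMi, h, Submodule.map_bot]
    · right
      rw [← hmapff V hVMi, h]
  have hdisj : Disjoint n₁ n₂ := by
    rw [disjoint_iff]
    rcases hn₁min (n₁ ⊓ n₂) inf_le_left
      (fun x hx w hw => ⟨hn₁inv x hx w hw.1, hn₂inv x hx w hw.2⟩) with h | h
    · exact h
    · exfalso
      have hle : n₁ ≤ n₂ := by rw [← h]; exact inf_le_right
      have hle2 : n₂ ≤ n₁ := by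
        have h2 : Submodule.map f n₁ ≤ Submodule.map f n₂ := Submodule.map_mono hle
        rw [hmapn₂] at h2
        exact h2
      have heq : n₂ = n₁ := le_antisymm hle2 hle
      have hfstable : Submodule.map f n₁ ≤ n₁ := heq.le
      have hkin := hkinv n₁ hn₁Mi hn₁inv hfstable
      rcases hMimin n₁ hn₁Mi hkin with h' | h'
      · exact hn₁ne h'
      · exact hn₁neMi h'
  have hsup : n₁ ⊔ n₂ = Mi := by
    have hsle : n₁ ⊔ n₂ ≤ Mi := sup_le hn₁Mi hn₂Mi
    have hsinv : AdInvariant 𝔨₁ (n₁ ⊔ n₂) := by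
      intro x hx w hw
      obtain ⟨a, ha, b, hb, rfl⟩ := Submodule.mem_sup.mp hw
      rw [lie_add]
      exact Submodule.add_mem _ (Submodule.mem_sup_left (hn₁inv x hx a ha))
        (Submodule.mem_sup_right (hn₂inv x hx b hb))
    have hfst : Submodule.map f (n₁ ⊔ n₂) ≤ n₁ ⊔ n₂ := by
      rw [Submodule.map_sup, hmapn₂]
      exact sup_le le_sup_right le_sup_left
    have hkin := hkinv _ hsle hsinv hfst
    rcases hMimin _ hsle hkin with h | h
    · exact absurd (le_bot_iff.mp (le_sup_left.trans h.le)) hn₁ne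
    · exact h
  have hequiv : AdEquiv 𝔨₁ n₁ n₂ :=
    ⟨f, rfl, fun u hu => hfinj u (hn₁Mi hu), fun x hx u hu => hfbr x (h𝔨₁𝔨 hx) u (hn₁Mi hu)⟩
  exact ⟨n₁, n₂, hn₁Mi, hn₂Mi, ⟨hn₁inv, hn₁ne, hn₁min⟩, hn₂irr, hdisj, hsup, hequiv⟩
end

section
/- Let (M = G/H, g) be a compact g.o. space with associated operator Λ on 𝔪, and let X, Y ∈ 𝔪 be eigenvectors of Λ with distinct eigenvalues λ and μ respectively. Then there exists h ∈ 𝔥 such that [X, Y] = (λ/(λ − μ))[h, X] + (μ/(λ − μ))[h, Y]. -/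
open Module

/-- A nonzero `X ∈ 𝔤` is a *geodesic vector* when the orbit `γ(t) = exp(tX)·o` is a
geodesic of the homogeneous Riemannian manifold `(G/K, g)`.  Since homogeneous Riemannian
geometry is not available in Mathlib, we encode this notion by its standard algebraic
characterization (Kowalski–Vanhecke): `⟨[X,Y]_𝔪, X_𝔪⟩ = 0` for all `Y ∈ 𝔪`, where
`⟨u, v⟩ = B(Λu, v)`, `B = -Killing form`, `Λ` is the associated operator of `g` and
`p` is the projection of `𝔤` onto `𝔪` along `𝔨`. -/
def IsGeodesicVector {𝔤 : Type*} [LieRing 𝔤] [LieAlgebra ℝ 𝔤]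
    (𝔪 : Submodule ℝ 𝔤) (p Λ : 𝔤 →ₗ[ℝ] 𝔤) (X : 𝔤) : Prop :=
  ∀ Y ∈ 𝔪, -(killingForm ℝ 𝔤 (Λ (p ⁅X, Y⁆)) (p X)) = 0

/-- `(G/H, g)` is a g.o. space: every geodesic through the origin `o = eH` is
homogeneous. -/
def IsGOSpace {𝔤 : Type*} [LieRing 𝔤] [LieAlgebra ℝ 𝔤]
    (𝔥 : LieSubalgebra ℝ 𝔤) (𝔪 : Submodule ℝ 𝔤) (p Λ : 𝔤 →ₗ[ℝ] 𝔤) : Prop :=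
  ∀ x ∈ 𝔪, x ≠ (0 : 𝔤) → ∃ a ∈ 𝔥, IsGeodesicVector 𝔪 p Λ (a + x)

/-- **Proposition 5 of Alekseevsky–Nikonorov**.
Let `(M = G/H, g)` be a compact g.o. space with associated operator `Λ` and
`B`-orthogonal reductive decomposition `𝔤 = 𝔥 ⊕ 𝔪`.  If `X, Y ∈ 𝔪` are eigenvectors of
`Λ` with distinct eigenvalues `λ` and `μ`, then there exists `h ∈ 𝔥` with
`[X, Y] = (λ/(λ-μ))[h, X] + (μ/(λ-μ))[h, Y]`. -/
theorem eigenvector_bracket_of_goSpace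
    {𝔤 : Type*} [LieRing 𝔤] [LieAlgebra ℝ 𝔤] [FiniteDimensional ℝ 𝔤]
    -- `M` compact, `G` compact connected semisimple:
    -- the Killing form of `𝔤` is negative definite
    (hcompact : ∀ x : 𝔤, x ≠ 0 → killingForm ℝ 𝔤 x x < 0)
    -- the `B`-orthogonal reductive decomposition `𝔤 = 𝔥 ⊕ 𝔪`
    (𝔥 : LieSubalgebra ℝ 𝔤) (𝔪 : Submodule ℝ 𝔤)
    (hcompl : IsCompl 𝔥.toSubmodule 𝔪)
    (horth : ∀ x ∈ 𝔥, ∀ y ∈ 𝔪, killingForm ℝ 𝔤 x y = 0)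
    (hinv : ∀ x ∈ 𝔥, ∀ w ∈ 𝔪, ⁅x, w⁆ ∈ 𝔪)
    -- `p` is the projection onto `𝔪` along `𝔥`
    (p : 𝔤 →ₗ[ℝ] 𝔤)
    (hp𝔪 : ∀ x ∈ 𝔪, p x = x) (hp𝔥 : ∀ x ∈ 𝔥, p x = 0) (hpr : ∀ x : 𝔤, p x ∈ 𝔪)
    -- `Λ` is the associated operator of the metric `g`: `⟨u, v⟩ = B(Λu, v)` on `𝔪`
    (Λ : 𝔤 →ₗ[ℝ] 𝔤)
    (hΛ𝔪 : ∀ x ∈ 𝔪, Λ x ∈ 𝔪)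
    (hΛsym : ∀ x ∈ 𝔪, ∀ y ∈ 𝔪, killingForm ℝ 𝔤 (Λ x) y = killingForm ℝ 𝔤 x (Λ y))
    (hΛpos : ∀ x ∈ 𝔪, x ≠ 0 → 0 < -(killingForm ℝ 𝔤 (Λ x) x))
    (hΛequiv : ∀ k ∈ 𝔥, ∀ x ∈ 𝔪, Λ ⁅k, x⁆ = ⁅k, Λ x⁆)
    -- `(G/H, g)` is a g.o. space
    (hgo : IsGOSpace 𝔥 𝔪 p Λ)
    -- `X, Y ∈ 𝔪` are eigenvectors of `Λ` with distinct eigenvalues `lam ≠ mu`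
    (X Y : 𝔤) (hX : X ∈ 𝔪) (hY : Y ∈ 𝔪)
    (lam mu : ℝ) (hlam : Λ X = lam • X) (hmu : Λ Y = mu • Y) (hne : lam ≠ mu) :
    ∃ h ∈ 𝔥, ⁅X, Y⁆ = (lam / (lam - mu)) • ⁅h, X⁆ + (mu / (lam - mu)) • ⁅h, Y⁆ := by
  have hsub : lam - mu ≠ 0 := sub_ne_zero.mpr hne
  -- a vector with B x x = 0 is 0
  have hzero : ∀ x : 𝔤, killingForm ℝ 𝔤 x x = 0 → x = 0 := by
    intro x hx
    by_contra hne'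
    exact absurd hx (ne_of_lt (hcompact x hne'))
  -- Decomposition: x - p x ∈ 𝔥 for all x
  have hdecomp : ∀ x : 𝔤, x - p x ∈ 𝔥 := by
    intro x
    obtain ⟨a, ha, b, hb, rfl⟩ : ∃ a ∈ 𝔥.toSubmodule, ∃ b ∈ 𝔪, a + b = x := by
      have htop : x ∈ 𝔥.toSubmodule ⊔ 𝔪 := by rw [hcompl.sup_eq_top]; trivial
      exact Submodule.mem_sup.mp htop
    have hpab : p (a + b) = b := by rw [map_add, hp𝔥 a ha, hp𝔪 b hb, zero_add]
    rw [hpab]; simpa using ha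
  by_cases hXY : X + Y = 0
  · -- degenerate case: Y = -X forces X = Y = 0
    have hYX : Y = -X := eq_neg_of_add_eq_zero_right hXY
    have h1 : Λ Y = lam • Y := by rw [hYX]; simp [hlam]
    have hY0 : (lam - mu) • Y = 0 := by rw [sub_smul, ← h1, ← hmu, sub_self]
    have hYz : Y = 0 := by
      rcases smul_eq_zero.mp hY0 with h | h
      · exact absurd h hsub
      · exact h
    have hXz : X = 0 := by
      have h2 := hXY
      rw [hYz, add_zero] at h2
      exact h2
    exact ⟨0, 𝔥.zero_mem, by simp [hXz, hYz]⟩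
  · obtain ⟨a, ha, hgeo⟩ := hgo (X + Y) (Submodule.add_mem 𝔪 hX hY) hXY
    -- the geodesic-vector condition gives B(Z, W) = 0 for W = ⁅a+(X+Y), lam•X+mu•Y⁆
    have hkey : ∀ Z ∈ 𝔪, killingForm ℝ 𝔤 Z ⁅a + (X + Y), lam • X + mu • Y⁆ = 0 := by
      intro Z hZ
      have h0 := hgeo Z hZ
      have hpaXY : p (a + (X + Y)) = X + Y := by
        rw [map_add, hp𝔥 a ha, map_add, hp𝔪 X hX, hp𝔪 Y hY, zero_add]
      rw [hpaXY, neg_eq_zero] at h0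
      -- B(Λ (p U), X+Y) = B(p U, Λ(X+Y))
      set U := ⁅a + (X + Y), Z⁆ with hU
      have h1 : killingForm ℝ 𝔤 (p U) (Λ (X + Y)) = 0 := by
        rw [← hΛsym (p U) (hpr U) (X + Y) (Submodule.add_mem 𝔪 hX hY)]
        exact h0
      have h2 : killingForm ℝ 𝔤 (U - p U) (Λ (X + Y)) = 0 :=
        horth _ (hdecomp U) _ (hΛ𝔪 _ (Submodule.add_mem 𝔪 hX hY))
      have h3 : killingForm ℝ 𝔤 U (Λ (X + Y)) = 0 := by
        have := congrArg₂ (· + ·) h2 h1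
        simpa [map_sub, LinearMap.sub_apply] using this
      have hΛXY : Λ (X + Y) = lam • X + mu • Y := by rw [map_add, hlam, hmu]
      rw [hΛXY] at h3
      -- invariance: B(⁅u, Z⁆, w) = -B(Z, ⁅u, w⁆)
      have hinvf : killingForm ℝ 𝔤 ⁅a + (X + Y), Z⁆ (lam • X + mu • Y)
          = - killingForm ℝ 𝔤 Z ⁅a + (X + Y), lam • X + mu • Y⁆ :=
        LieModule.traceForm_apply_lie_apply' ℝ 𝔤 𝔤 _ _ _
      rw [hU] at h3
      rw [h3] at hinvf
      linarith [hinvf]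
    -- W := ⁅a+(X+Y), lam•X+mu•Y⁆; then p W = 0
    set W := ⁅a + (X + Y), lam • X + mu • Y⁆ with hW
    have hpW : p W = 0 := by
      apply hzero
      have h1 : killingForm ℝ 𝔤 (p W) W = 0 := hkey (p W) (hpr W)
      have h2 : killingForm ℝ 𝔤 (p W) (W - p W) = 0 := by
        rw [LieModule.traceForm_comm]
        exact horth _ (hdecomp W) _ (hpr W)
      have : killingForm ℝ 𝔤 (p W) (p W)
          = killingForm ℝ 𝔤 (p W) W - killingForm ℝ 𝔤 (p W) (W - p W) := by
        simp [map_sub]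
      rw [this, h1, h2, sub_zero]
    -- expand W
    have hWexp : W = lam • ⁅a, X⁆ + mu • ⁅a, Y⁆ + (mu - lam) • ⁅X, Y⁆ := by
      rw [hW]
      have hskew : ⁅Y, X⁆ = -⁅X, Y⁆ := by rw [← lie_skew X Y, neg_neg]
      simp only [add_lie, lie_add, lie_smul, lie_self, smul_zero, hskew, sub_smul]
      module
    -- show ⁅X, Y⁆ ∈ 𝔪, i.e. p ⁅X, Y⁆ = ⁅X, Y⁆
    have hbXY : ∀ k ∈ 𝔥, killingForm ℝ 𝔤 ⁅X, Y⁆ k = 0 := by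
      intro k hk
      have hkY : ⁅k, Y⁆ ∈ 𝔪 := hinv k hk Y hY
      have h1 : lam * killingForm ℝ 𝔤 X ⁅k, Y⁆ = mu * killingForm ℝ 𝔤 X ⁅k, Y⁆ := by
        have e1 : killingForm ℝ 𝔤 (Λ X) ⁅k, Y⁆ = killingForm ℝ 𝔤 X (Λ ⁅k, Y⁆) :=
          hΛsym X hX _ hkY
        rw [hlam, hΛequiv k hk Y hY, hmu, lie_smul] at e1
        simpa [map_smul] using e1
      have h2 : killingForm ℝ 𝔤 X ⁅k, Y⁆ = 0 := by
        by_contra hc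
        exact hne (mul_right_cancel₀ hc h1)
      have h3 : killingForm ℝ 𝔤 ⁅X, Y⁆ k = killingForm ℝ 𝔤 X ⁅Y, k⁆ :=
        LieModule.traceForm_apply_lie_apply ℝ 𝔤 𝔤 _ _ _
      have hsk : ⁅Y, k⁆ = -⁅k, Y⁆ := by rw [← lie_skew k Y, neg_neg]
      rw [h3, hsk, map_neg, h2, neg_zero]
    have hpXY : p ⁅X, Y⁆ = ⁅X, Y⁆ := by
      have hc : ⁅X, Y⁆ - p ⁅X, Y⁆ = 0 := by
        apply hzero
        have e1 : killingForm ℝ 𝔤 ⁅X, Y⁆ (⁅X, Y⁆ - p ⁅X, Y⁆) = 0 :=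
          hbXY _ (hdecomp ⁅X, Y⁆)
        have e2 : killingForm ℝ 𝔤 (p ⁅X, Y⁆) (⁅X, Y⁆ - p ⁅X, Y⁆) = 0 := by
          rw [LieModule.traceForm_comm]
          exact horth _ (hdecomp ⁅X, Y⁆) _ (hpr ⁅X, Y⁆)
        have : killingForm ℝ 𝔤 (⁅X, Y⁆ - p ⁅X, Y⁆) (⁅X, Y⁆ - p ⁅X, Y⁆)
            = killingForm ℝ 𝔤 ⁅X, Y⁆ (⁅X, Y⁆ - p ⁅X, Y⁆)
              - killingForm ℝ 𝔤 (p ⁅X, Y⁆) (⁅X, Y⁆ - p ⁅X, Y⁆) := by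
          simp only [map_sub, LinearMap.sub_apply]
          rw [LieModule.traceForm_comm ℝ 𝔤 𝔤 (p ⁅X, Y⁆) ⁅X, Y⁆]
        rw [this, e1, e2, sub_zero]
      exact (sub_eq_zero.mp hc).symm
    -- conclude
    have hpWexp : p W = lam • ⁅a, X⁆ + mu • ⁅a, Y⁆ + (mu - lam) • ⁅X, Y⁆ := by
      rw [hWexp]
      rw [map_add, map_add, map_smul, map_smul, map_smul,
        hp𝔪 _ (hinv a ha X hX), hp𝔪 _ (hinv a ha Y hY), hpXY]
    rw [hpW] at hpWexp
    refine ⟨a, ha, ?_⟩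
    have heq : (lam - mu) • ⁅X, Y⁆ = lam • ⁅a, X⁆ + mu • ⁅a, Y⁆ := by
      have h2 : (lam - mu) • ⁅X, Y⁆
          = (lam • ⁅a, X⁆ + mu • ⁅a, Y⁆ + (mu - lam) • ⁅X, Y⁆) + (lam - mu) • ⁅X, Y⁆ := by
        rw [← hpWexp, zero_add]
      rw [h2]; module
    have hfin := congrArg (fun z => (lam - mu)⁻¹ • z) heq
    simp only [smul_smul, smul_add] at hfin
    rw [inv_mul_cancel₀ hsub, one_smul] at hfin
    rw [div_eq_inv_mul, div_eq_inv_mul]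
    exact hfin
end
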